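/- arXiv:2201.03373 — 6 statements merged into one kernel-verified Lean document; each statement's English description precedes it below -/
import Mathlib

section
/- Fix γ > 0 and a sign ε ∈ {+1, −1}. For each B > 0 the function r ↦ x_{B,ε}(r) is differentiable at every r ≠ 0, and for every fixed r ≠ 0 one has lim_{B→0⁺} x_{B,ε}(r) = sign(r)·√(π/(2γ))·|r|^{−1/2} and lim_{B→0⁺} (d/dr)x_{B,ε}(r) = −(√π/(2√(2γ)))·|r|^{−3/2}. -/
open Filter Topology


noncomputable def fB (ε B y : ℝ) : ℝ := (2 * Real.sqrt (y^2 + B^2/4) + ε*B) * y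
noncomputable def FD (ε B y : ℝ) : ℝ :=
  2 * Real.sqrt (y^2 + B^2/4) + 2*y^2/Real.sqrt (y^2+B^2/4) + ε*B

lemma fB_hasDerivAt (ε B y : ℝ) (h : y^2 + B^2/4 ≠ 0) :
    HasDerivAt (fB ε B) (FD ε B y) y := by
  have h0 : 0 ≤ y^2 + B^2/4 := by positivity
  have hpos : 0 < y^2 + B^2/4 := lt_of_le_of_ne h0 (Ne.symm h)
  have hS : 0 < Real.sqrt (y^2 + B^2/4) := Real.sqrt_pos.2 hpos
  have hu : HasDerivAt (fun y : ℝ => y^2 + B^2/4) (2*y) y := by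
    simpa using ((hasDerivAt_pow 2 y).add_const (B^2/4))
  have hsqrt : HasDerivAt (fun y : ℝ => Real.sqrt (y^2 + B^2/4))
      (1 / (2 * Real.sqrt (y^2+B^2/4)) * (2*y)) y :=
    (Real.hasDerivAt_sqrt h).comp y hu
  have hmain := ((hsqrt.const_mul 2).add_const (ε*B)).mul (hasDerivAt_id y)
  have heq : fB ε B = fun y : ℝ => (2 * Real.sqrt (y^2 + B^2/4) + ε*B) * y := rfl
  rw [heq]
  convert hmain using 1
  · rfl
  · rfl
  · rfl
  simp only [FD, id]
  set s := Real.sqrt (y^2 + B^2/4) with hs_def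
  field_simp
  ring

lemma fB_odd (ε B y : ℝ) : fB ε B (-y) = - fB ε B y := by
  simp only [fB, neg_sq]; ring

lemma fB_cont (ε B : ℝ) : Continuous (fB ε B) := by
  unfold fB
  continuity

lemma fB_strictMono (ε : ℝ) (hε : ε = 1 ∨ ε = -1) (B : ℝ) (hB : 0 ≤ B) :
    StrictMono (fB ε B) := by
  have hmono : StrictMonoOn (fB ε B) (Set.Ici 0) := by
    apply strictMonoOn_of_deriv_pos (convex_Ici 0) (fB_cont ε B).continuousOn
    intro y hy
    rw [interior_Ici] at hy
    have hy0 : 0 < y := hy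
    have hne : y^2 + B^2/4 ≠ 0 := by positivity
    rw [(fB_hasDerivAt ε B y hne).deriv]
    have hS : Real.sqrt (y^2+B^2/4) ≥ Real.sqrt (B^2/4) := by
      apply Real.sqrt_le_sqrt; nlinarith
    have hSB : Real.sqrt (B^2/4) = B/2 := by
      rw [show B^2/4 = (B/2)^2 by ring, Real.sqrt_sq (by linarith)]
    have hSpos : 0 < Real.sqrt (y^2+B^2/4) := Real.sqrt_pos.2 (by positivity)
    have hεB : ε * B ≥ -B := by rcases hε with h|h <;> rw [h] <;> nlinarith
    have : 0 < 2*y^2/Real.sqrt (y^2+B^2/4) := by positivity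
    simp only [FD]
    nlinarith [hS, hSB]
  have hz : fB ε B 0 = 0 := by simp [fB]
  intro a b hab
  rcases le_or_gt 0 a with ha | ha
  · exact hmono ha (le_trans ha hab.le) hab
  · rcases le_or_gt 0 b with hb | hb
    · have h1 : fB ε B a < 0 := by
        have := hmono (Set.mem_Ici.2 (le_refl (0:ℝ))) (by linarith : (0:ℝ) ≤ -a) (by linarith)
        rw [fB_odd, hz] at this
        linarith
      have h2 : 0 ≤ fB ε B b := by
        rcases eq_or_lt_of_le hb with h | h
        · rw [← h, hz]
        · have := hmono (Set.mem_Ici.2 (le_refl (0:ℝ))) hb h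
          rw [hz] at this
          linarith
      linarith
    · have := hmono (by linarith : (0:ℝ) ≤ -b) (by linarith : (0:ℝ) ≤ -a) (by linarith)
      rw [fB_odd, fB_odd] at this
      linarith

lemma fB_contB (ε y : ℝ) : Continuous (fun B => fB ε B y) := by
  unfold fB
  continuity

set_option maxHeartbeats 1000000 in

/-- Fix `γ > 0` and a sign `ε ∈ {+1, -1}`.  For each `B > 0` the function
`r ↦ x_{B,ε}(r)` is differentiable at every `r ≠ 0`, and for every fixed `r ≠ 0`,
`x_{B,ε}(r) → sign(r)·√(π/(2γ))·|r|^(-1/2)` and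
`(d/dr) x_{B,ε}(r) → -(√π/(2√(2γ)))·|r|^(-3/2)` as `B → 0⁺`. -/
theorem stmt_2 (γ : ℝ) (hγ : 0 < γ) (ε : ℝ) (hε : ε = 1 ∨ ε = -1)
    (x : ℝ → ℝ → ℝ)
    (hx : ∀ B : ℝ, 0 < B → ∀ r : ℝ, r ≠ 0 →
      (2 * Real.sqrt (x B r ^ 2 + B ^ 2 / 4) + ε * B) * x B r = Real.pi / (γ * r)) :
    (∀ B : ℝ, 0 < B → ∀ r : ℝ, r ≠ 0 → DifferentiableAt ℝ (x B) r) ∧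
    (∀ r : ℝ, r ≠ 0 →
      Tendsto (fun B => x B r) (𝓝[>] 0)
        (𝓝 (Real.sign r * Real.sqrt (Real.pi / (2 * γ)) * |r| ^ (-(1 / 2 : ℝ))))) ∧
    (∀ r : ℝ, r ≠ 0 →
      Tendsto (fun B => deriv (x B) r) (𝓝[>] 0)
        (𝓝 (-(Real.sqrt Real.pi / (2 * Real.sqrt (2 * γ))) * |r| ^ (-(3 / 2 : ℝ))))) := by
  have hπ := Real.pi_pos
  set c : ℝ → ℝ := fun s => Real.pi/γ * s⁻¹ with hc_def
  have hc_eq : ∀ s : ℝ, Real.pi / (γ * s) = c s := by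
    intro s; show _ = Real.pi/γ * s⁻¹; rw [← div_eq_mul_inv, div_div]
  have hxp : ∀ B, 0 < B → ∀ r : ℝ, r ≠ 0 → fB ε B (x B r) = c r := by
    intro B hB r hr; rw [← hc_eq]; exact hx B hB r hr
  have hcne : ∀ r : ℝ, r ≠ 0 → c r ≠ 0 := by
    intro r hr
    exact mul_ne_zero (div_ne_zero hπ.ne' hγ.ne') (inv_ne_zero hr)
  have hmono : ∀ B : ℝ, 0 ≤ B → StrictMono (fB ε B) := fun B hB => fB_strictMono ε hε B hB
  have hxne : ∀ B, 0 < B → ∀ r : ℝ, r ≠ 0 → x B r ≠ 0 := by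
    intro B hB r hr h0
    have h := hxp B hB r hr
    rw [h0] at h
    simp [fB] at h
    exact hcne r hr h.symm
  have hcc : ∀ s : ℝ, s ≠ 0 → ContinuousAt c s := by
    intro s hs
    exact continuousAt_const.mul (continuousAt_inv₀ hs)
  have hccc : ∀ s : ℝ, s ≠ 0 → c (c s) = s := by
    intro s hs
    show Real.pi/γ * (Real.pi/γ * s⁻¹)⁻¹ = s
    field_simp
  have hcont : ∀ B, 0 < B → ∀ r : ℝ, r ≠ 0 → ContinuousAt (x B) r := by
    intro B hB r hr
    rw [ContinuousAt]
    apply tendsto_order.2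
    constructor
    · intro a ha
      have hlt : fB ε B a < c r := by rw [← hxp B hB r hr]; exact hmono B hB.le ha
      filter_upwards [(hcc r hr).eventually (eventually_gt_nhds hlt), eventually_ne_nhds hr] with s h1 h2
      exact (hmono B hB.le).lt_iff_lt.1 (by rw [hxp B hB s h2]; exact h1)
    · intro a ha
      have hlt : c r < fB ε B a := by rw [← hxp B hB r hr]; exact hmono B hB.le ha
      filter_upwards [(hcc r hr).eventually (eventually_lt_nhds hlt), eventually_ne_nhds hr] with s h1 h2
      exact (hmono B hB.le).lt_iff_lt.1 (by rw [hxp B hB s h2]; exact h1)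
  -- key derivative formula
  have key : ∀ B, 0 < B → ∀ r : ℝ, r ≠ 0 →
      HasDerivAt (x B) ((FD ε B (x B r))⁻¹ * (Real.pi/γ * (-(r^2)⁻¹))) r := by
    intro B hB r hr
    have ha : c r ≠ 0 := hcne r hr
    have hcar : c (c r) = r := hccc r hr
    set g : ℝ → ℝ := fun y => x B (c y) with hg_def
    have hga : g (c r) = x B r := by rw [hg_def]; simp only; rw [hcar]
    have hXne : x B r ≠ 0 := hxne B hB r hr
    have hf' : HasDerivAt (fB ε B) (FD ε B (x B r)) (g (c r)) := by
      rw [hga]; exact fB_hasDerivAt ε B _ (by positivity)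
    have hFD : 0 < FD ε B (x B r) := by
      have hS : Real.sqrt ((x B r)^2+B^2/4) ≥ Real.sqrt (B^2/4) :=
        Real.sqrt_le_sqrt (by nlinarith)
      have hSB : Real.sqrt (B^2/4) = B/2 := by
        rw [show B^2/4 = (B/2)^2 by ring, Real.sqrt_sq (by linarith)]
      have hSpos : 0 < Real.sqrt ((x B r)^2+B^2/4) := Real.sqrt_pos.2 (by positivity)
      have hεB : ε * B ≥ -B := by rcases hε with h|h <;> rw [h] <;> nlinarith
      have hq : 0 < 2*(x B r)^2/Real.sqrt ((x B r)^2+B^2/4) := by positivity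
      simp only [FD]
      nlinarith [hS, hSB]
    have hgc : ContinuousAt g (c r) :=
      ContinuousAt.comp (by rw [hcar]; exact hcont B hB r hr) (hcc (c r) ha)
    have hfg : ∀ᶠ y in 𝓝 (c r), fB ε B (g y) = y := by
      filter_upwards [eventually_ne_nhds ha] with y hy
      have hcy : c y ≠ 0 := hcne y hy
      rw [hg_def]; simp only; rw [hxp B hB (c y) hcy, hccc y hy]
    have hgd : HasDerivAt g (FD ε B (x B r))⁻¹ (c r) :=
      HasDerivAt.of_local_left_inverse hgc hf' (ne_of_gt hFD) hfg
    have hcd : HasDerivAt c (Real.pi/γ * (-(r^2)⁻¹)) r := (hasDerivAt_inv hr).const_mul (Real.pi/γ)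
    have hcomp : HasDerivAt (g ∘ c) ((FD ε B (x B r))⁻¹ * (Real.pi/γ * (-(r^2)⁻¹))) r :=
      HasDerivAt.comp r hgd hcd
    refine hcomp.congr_of_eventuallyEq ?_
    filter_upwards [eventually_ne_nhds hr] with s hs
    show x B s = (g ∘ c) s
    simp only [Function.comp, hg_def]
    rw [hccc s hs]
  have P2 : ∀ r : ℝ, r ≠ 0 → Tendsto (fun B => x B r) (𝓝[>] (0:ℝ))
      (𝓝 (Real.sign r * Real.sqrt (Real.pi / (2 * γ)) * |r| ^ (-(1 / 2 : ℝ)))) := by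
    intro r hr
    have htpos : 0 < |r| := abs_pos.2 hr
    set A := Real.sqrt (Real.pi/(2*γ)) with hA_def
    set u := |r| ^ (-(1 / 2 : ℝ)) with hu_def
    have hA2 : A^2 = Real.pi/(2*γ) := Real.sq_sqrt (by positivity)
    have hApos : 0 < A := Real.sqrt_pos.2 (by positivity)
    have hupos : 0 < u := Real.rpow_pos_of_pos htpos _
    set x₀ := Real.sign r * A * u with hx₀_def
    have hsgn : |Real.sign r| = 1 := by
      rcases lt_or_gt_of_ne hr with h|h
      · rw [Real.sign_of_neg h]; norm_num
      · rw [Real.sign_of_pos h]; norm_num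
    have hx₀abs : |x₀| = A * u := by
      rw [hx₀_def, abs_mul, abs_mul, hsgn, one_mul, abs_of_pos hApos, abs_of_pos hupos]
    have hsq : u^2 = |r|⁻¹ := by
      rw [hu_def, ← Real.rpow_natCast (|r| ^ (-(1 / 2 : ℝ))) 2, ← Real.rpow_mul htpos.le]
      norm_num
      rw [Real.rpow_neg_one]
    have hscalar : Real.sign r * |r|⁻¹ = r⁻¹ := by
      rcases lt_or_gt_of_ne hr with h|h
      · rw [Real.sign_of_neg h, abs_of_neg h]; field_simp
      · rw [Real.sign_of_pos h, abs_of_pos h]; simp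
    have hroot : fB ε 0 x₀ = c r := by
      simp only [fB]
      rw [show x₀^2 + (0:ℝ)^2/4 = x₀^2 by ring, Real.sqrt_sq_eq_abs, hx₀abs]
      have hexp : (2 * (A*u) + ε * 0) * x₀ = 2*A^2*u^2*Real.sign r := by rw [hx₀_def]; ring
      rw [hexp, hA2, hsq]
      show _ = Real.pi/γ * r⁻¹
      rw [← hscalar]
      field_simp
    have hfB0 : ∀ y : ℝ, Tendsto (fun B => fB ε B y) (𝓝[>] (0:ℝ)) (𝓝 (fB ε 0 y)) := by
      intro y
      exact ((fB_contB ε y).tendsto 0).mono_left nhdsWithin_le_nhds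
    apply tendsto_order.2
    constructor
    · intro a ha
      have hlt : fB ε 0 a < c r := by rw [← hroot]; exact hmono 0 le_rfl ha
      filter_upwards [(hfB0 a).eventually (eventually_lt_nhds hlt), self_mem_nhdsWithin] with B h1 h2
      have hB : (0:ℝ) < B := h2
      exact (hmono B hB.le).lt_iff_lt.1 (by rw [hxp B hB r hr]; exact h1)
    · intro a ha
      have hlt : c r < fB ε 0 a := by rw [← hroot]; exact hmono 0 le_rfl ha
      filter_upwards [(hfB0 a).eventually (eventually_gt_nhds hlt), self_mem_nhdsWithin] with B h1 h2
      have hB : (0:ℝ) < B := h2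
      exact (hmono B hB.le).lt_iff_lt.1 (by rw [hxp B hB r hr]; exact h1)
  refine ⟨fun B hB r hr => (key B hB r hr).differentiableAt, P2, ?_⟩
  intro r hr
  have htpos : 0 < |r| := abs_pos.2 hr
  set A := Real.sqrt (Real.pi/(2*γ)) with hA_def
  set u := |r| ^ (-(1 / 2 : ℝ)) with hu_def
  have hA2 : A^2 = Real.pi/(2*γ) := Real.sq_sqrt (by positivity)
  have hApos : 0 < A := Real.sqrt_pos.2 (by positivity)
  have hupos : 0 < u := Real.rpow_pos_of_pos htpos _
  set x₀ := Real.sign r * A * u with hx₀_def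
  have hsgn : |Real.sign r| = 1 := by
    rcases lt_or_gt_of_ne hr with h|h
    · rw [Real.sign_of_neg h]; norm_num
    · rw [Real.sign_of_pos h]; norm_num
  have hx₀abs : |x₀| = A * u := by
    rw [hx₀_def, abs_mul, abs_mul, hsgn, one_mul, abs_of_pos hApos, abs_of_pos hupos]
  have hX : Tendsto (fun B => x B r) (𝓝[>] (0:ℝ)) (𝓝 x₀) := P2 r hr
  have hpair : Tendsto (fun B => (B, x B r)) (𝓝[>] (0:ℝ)) (𝓝 ((0:ℝ), x₀)) :=
    (tendsto_id.mono_right nhdsWithin_le_nhds).prodMk_nhds hX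
  have hx₀sq : x₀^2 + (0:ℝ)^2/4 = x₀^2 := by ring
  have hGc : ContinuousAt (fun p : ℝ × ℝ => FD ε p.1 p.2) (0, x₀) := by
    show ContinuousAt (fun p : ℝ × ℝ =>
      2*Real.sqrt (p.2^2+p.1^2/4) + 2*p.2^2/Real.sqrt (p.2^2+p.1^2/4) + ε*p.1) (0, x₀)
    have hc1 : Continuous (fun p : ℝ × ℝ => Real.sqrt (p.2^2 + p.1^2/4)) :=
      Real.continuous_sqrt.comp ((continuous_snd.pow 2).add ((continuous_fst.pow 2).div_const 4))
    have hne : Real.sqrt (x₀^2 + (0:ℝ)^2/4) ≠ 0 := by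
      rw [hx₀sq, Real.sqrt_sq_eq_abs, hx₀abs]; positivity
    apply ContinuousAt.add
    apply ContinuousAt.add
    · exact (continuous_const.mul hc1).continuousAt
    · exact ContinuousAt.div (continuous_const.mul (continuous_snd.pow 2)).continuousAt
        hc1.continuousAt hne
    · exact (continuous_const.mul continuous_fst).continuousAt
  have hFDt : Tendsto (fun B => FD ε B (x B r)) (𝓝[>] (0:ℝ)) (𝓝 (FD ε 0 x₀)) := by
    have h1 : Tendsto ((fun p : ℝ × ℝ => FD ε p.1 p.2) ∘ (fun B => (B, x B r)))
        (𝓝[>] (0:ℝ)) (𝓝 ((fun p : ℝ × ℝ => FD ε p.1 p.2) (0, x₀))) := hGc.tendsto.comp hpair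
    exact h1.congr (fun B => rfl)
  have hFD0 : FD ε 0 x₀ = 4*(A*u) := by
    simp only [FD]
    rw [hx₀sq, Real.sqrt_sq_eq_abs, hx₀abs]
    have hxx : x₀^2 = (A*u)^2 := by rw [← hx₀abs, sq_abs]
    rw [hxx]
    have hAu : (0:ℝ) < A*u := by positivity
    field_simp
    ring
  rw [hFD0] at hFDt
  have hAune : (4*(A*u)) ≠ 0 := by positivity
  have hmain : Tendsto (fun B => (FD ε B (x B r))⁻¹ * (Real.pi/γ * (-(r^2)⁻¹))) (𝓝[>] (0:ℝ))
      (𝓝 ((4*(A*u))⁻¹ * (Real.pi/γ * (-(r^2)⁻¹)))) := (hFDt.inv₀ hAune).mul_const _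
  have hev : (fun B => (FD ε B (x B r))⁻¹ * (Real.pi/γ * (-(r^2)⁻¹))) =ᶠ[𝓝[>] (0:ℝ)]
      (fun B => deriv (x B) r) := by
    filter_upwards [self_mem_nhdsWithin] with B hB
    exact ((key B hB r hr).deriv).symm
  have hfin := hmain.congr' hev
  have h2γpos : 0 < Real.sqrt (2*γ) := Real.sqrt_pos.2 (by linarith)
  have hsd : A = Real.sqrt Real.pi / Real.sqrt (2*γ) := Real.sqrt_div hπ.le _
  have hcoef : Real.sqrt Real.pi/(2*Real.sqrt (2*γ)) = A/2 := by rw [hsd]; ring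
  have hπγ : Real.pi/γ = 2*A^2 := by rw [hA2]; field_simp
  have hr2 : r^2 = |r|^2 := (sq_abs r).symm
  have hut : u * |r|^2 = |r| ^ ((3:ℝ)/2) := by
    rw [hu_def, ← Real.rpow_natCast |r| 2, ← Real.rpow_add htpos]
    norm_num
  have hinv : (|r| ^ ((3:ℝ)/2))⁻¹ = |r| ^ (-(3 / 2 : ℝ)) := by
    rw [← Real.rpow_neg htpos.le]
  have halg : (4*(A*u))⁻¹ * (Real.pi/γ * (-(r^2)⁻¹)) =
      -(Real.sqrt Real.pi/(2*Real.sqrt (2*γ))) * |r| ^ (-(3 / 2 : ℝ)) := by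
    rw [hπγ, hr2, hcoef]
    rw [show (4*(A*u))⁻¹ * (2*A^2 * (-(|r|^2)⁻¹)) = -(A/2) * (u*|r|^2)⁻¹ by
      field_simp
      ring]
    rw [hut, hinv]
  rw [halg] at hfin
  exact hfin
end

section
/- Fix γ > 0. For every fixed r ≠ 0, the function x_{B,+} and its derivative converge pointwise to zero as B → +∞, and more precisely lim_{B→+∞} B·x_{B,+}(r) = sign(r)·(π/(2γ))·|r|^{−1} and lim_{B→+∞} B·(d/dr)x_{B,+}(r) = −(π/(2γ))·|r|^{−2}. -/
open Filter Topology

lemma stmt3_hasDerivAt (γ : ℝ) (hγ : 0 < γ)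
    (x : ℝ → ℝ → ℝ)
    (hx : ∀ B : ℝ, 0 < B → ∀ r : ℝ, r ≠ 0 →
      (2 * Real.sqrt (x B r ^ 2 + B ^ 2 / 4) + B) * x B r = Real.pi / (γ * r))
    (B : ℝ) (hB : 0 < B) (r : ℝ) (hr : r ≠ 0) :
    HasDerivAt (x B)
      ((2 * Real.sqrt (x B r ^ 2 + B ^ 2 / 4)
        + 2 * (x B r) ^ 2 / Real.sqrt (x B r ^ 2 + B ^ 2 / 4) + B)⁻¹
        * (-(Real.pi / γ) / r ^ 2)) r := by
  set F : ℝ → ℝ := fun t => (2 * Real.sqrt (t ^ 2 + B ^ 2 / 4) + B) * t with hF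
  set F' : ℝ → ℝ := fun t => 2 * Real.sqrt (t ^ 2 + B ^ 2 / 4)
      + 2 * t ^ 2 / Real.sqrt (t ^ 2 + B ^ 2 / 4) + B with hF'
  have hq : ∀ t : ℝ, (0:ℝ) < t ^ 2 + B ^ 2 / 4 := fun t => by positivity
  have hqs : ∀ t : ℝ, (0:ℝ) < Real.sqrt (t ^ 2 + B ^ 2 / 4) :=
    fun t => Real.sqrt_pos.mpr (hq t)
  have hFd : ∀ t : ℝ, HasDerivAt F (F' t) t := by
    intro t
    have h1 : HasDerivAt (fun t : ℝ => t ^ 2 + B ^ 2 / 4) (2 * t) t := by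
      simpa using (hasDerivAt_pow 2 t).add_const (B ^ 2 / 4)
    have hst : HasDerivAt (fun t : ℝ => Real.sqrt (t ^ 2 + B ^ 2 / 4))
        (t / Real.sqrt (t ^ 2 + B ^ 2 / 4)) t := by
      have := (Real.hasDerivAt_sqrt (ne_of_gt (hq t))).comp t h1
      refine HasDerivAt.congr_deriv this ?_
      ring
    have := ((hst.const_mul 2).add_const B).mul (hasDerivAt_id t)
    refine HasDerivAt.congr_deriv this ?_
    simp only [hF', id]
    ring
  have hF'pos : ∀ t : ℝ, 0 < F' t := by
    intro t
    have h1 : (0:ℝ) ≤ 2 * t ^ 2 / Real.sqrt (t ^ 2 + B ^ 2 / 4) := by positivity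
    have := hqs t
    simp only [hF']
    nlinarith
  have hmono : StrictMono F :=
    strictMono_of_deriv_pos (fun t => by rw [(hFd t).deriv]; exact hF'pos t)
  have hcont : Continuous F := by
    have h1 : Continuous fun t : ℝ => Real.sqrt (t ^ 2 + B ^ 2 / 4) :=
      Real.continuous_sqrt.comp (by continuity)
    exact ((continuous_const.mul h1).add continuous_const).mul continuous_id
  have hsurj : Function.Surjective F := by
    apply hcont.surjective
    · apply tendsto_atTop_mono' atTop (f₁ := fun t : ℝ => B * t)
      · filter_upwards [eventually_ge_atTop (0:ℝ)] with t ht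
        have := Real.sqrt_nonneg (t ^ 2 + B ^ 2 / 4)
        simp only [hF]
        nlinarith
      · exact Tendsto.const_mul_atTop hB tendsto_id
    · apply tendsto_atBot_mono' atBot (f₁ := fun t : ℝ => B * t)
      · filter_upwards [eventually_le_atBot (0:ℝ)] with t ht
        have := Real.sqrt_nonneg (t ^ 2 + B ^ 2 / 4)
        simp only [hF]
        nlinarith
      · exact Tendsto.const_mul_atBot hB tendsto_id
  set oi := StrictMono.orderIsoOfSurjective F hmono hsurj with hoi
  have hFg : ∀ y : ℝ, F (oi.symm y) = y := fun y =>
    StrictMono.orderIsoOfSurjective_self_symm_apply F hmono hsurj y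
  have hgB : ∀ r' : ℝ, r' ≠ 0 → x B r' = oi.symm (Real.pi / (γ * r')) := by
    intro r' hr'
    apply hmono.injective
    rw [hFg]
    exact hx B hB r' hr'
  have hgc : oi.symm (Real.pi / (γ * r)) = x B r := (hgB r hr).symm
  have hDg : HasDerivAt (⇑oi.symm) ((F' (x B r))⁻¹) (Real.pi / (γ * r)) := by
    apply HasDerivAt.of_local_left_inverse (oi.symm.continuous.continuousAt)
      _ (ne_of_gt (hF'pos (x B r))) (Eventually.of_forall hFg)
    rw [hgc]
    exact hFd (x B r)
  have hinner : HasDerivAt (fun r' : ℝ => Real.pi / (γ * r')) (-(Real.pi / γ) / r ^ 2) r := by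
    have hfun : (fun r' : ℝ => Real.pi / (γ * r')) = fun r' => (Real.pi / γ) * r'⁻¹ := by
      funext r'
      rw [← div_div, div_eq_mul_inv]
    rw [hfun]
    have h2 := (hasDerivAt_inv hr).const_mul (Real.pi / γ)
    refine HasDerivAt.congr_deriv h2 ?_
    ring
  have hcomp := hDg.comp r hinner
  have hev : (x B) =ᶠ[𝓝 r] fun r' => oi.symm (Real.pi / (γ * r')) := by
    filter_upwards [eventually_ne_nhds hr] with r' hr'
    exact hgB r' hr'
  exact hcomp.congr_of_eventuallyEq hev

lemma stmt3_algebra1 (B s w c : ℝ) (hc : c ≠ 0)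
    (hw2 : w ^ 2 = s ^ 2 + B ^ 2 / 4) (heq : (2 * w + B) * s = c) :
    B * s = c / 2 - 2 * s ^ 4 / c := by
  have h1 : 2 * w * s = c - B * s := by linear_combination heq
  have h2 : (2 * w * s) ^ 2 = (c - B * s) ^ 2 := by rw [h1]
  have key : c ^ 2 - 2 * B * c * s - 4 * s ^ 4 = 0 := by
    linear_combination -h2 + 4 * s ^ 2 * hw2
  apply mul_right_cancel₀ (mul_ne_zero (two_ne_zero (α := ℝ)) hc)
  have hexp : (c / 2 - 2 * s ^ 4 / c) * (2 * c) = c ^ 2 - 4 * s ^ 4 := by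
    field_simp
    ring
  rw [hexp]
  linear_combination -key

lemma stmt3_algebra2 (B s w : ℝ) (hB : 0 < B) (hw : 0 < w)
    (hw2 : w ^ 2 = s ^ 2 + B ^ 2 / 4) :
    Real.sqrt ((s / B) ^ 2 + 1 / 4) = w / B ∧
      (2 * w + 2 * s ^ 2 / w + B) / B
        = 2 * (w / B) + 2 * (s / B) ^ 2 / (w / B) + 1 := by
  constructor
  · have h3 : (s / B) ^ 2 + 1 / 4 = (w / B) ^ 2 := by
      rw [div_pow, div_pow, hw2]
      field_simp
    rw [h3, Real.sqrt_sq (by positivity)]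
  · field_simp

lemma stmt3_algebra3 (B D K : ℝ) (hB : 0 < B) (hD : 0 < D) :
    B * (D⁻¹ * K) = K * (D / B)⁻¹ := by
  field_simp

/-- Fix `γ > 0`.  For every fixed `r ≠ 0`, the function `x_{B,+}` and its
derivative converge pointwise to zero as `B → +∞`, and more precisely
`B·x_{B,+}(r) → sign(r)·(π/(2γ))·|r|⁻¹` and `B·(d/dr)x_{B,+}(r) → -(π/(2γ))·|r|^(-2)`. -/
theorem stmt_3 (γ : ℝ) (hγ : 0 < γ)
    (x : ℝ → ℝ → ℝ)
    (hx : ∀ B : ℝ, 0 < B → ∀ r : ℝ, r ≠ 0 →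
      (2 * Real.sqrt (x B r ^ 2 + B ^ 2 / 4) + B) * x B r = Real.pi / (γ * r)) :
    ∀ r : ℝ, r ≠ 0 →
      Tendsto (fun B => x B r) atTop (𝓝 0) ∧
      Tendsto (fun B => deriv (x B) r) atTop (𝓝 0) ∧
      Tendsto (fun B => B * x B r) atTop
        (𝓝 (Real.sign r * (Real.pi / (2 * γ)) * |r|⁻¹)) ∧
      Tendsto (fun B => B * deriv (x B) r) atTop
        (𝓝 (-(Real.pi / (2 * γ)) * |r| ^ (-(2 : ℝ)))) := by
  intro r hr
  obtain ⟨c, hc⟩ : ∃ c : ℝ, Real.pi / (γ * r) = c := ⟨_, rfl⟩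
  have hcne : c ≠ 0 := by
    rw [← hc]
    exact div_ne_zero Real.pi_ne_zero (mul_ne_zero hγ.ne' hr)
  -- basic bound and x → 0
  have hbound : ∀ᶠ B in atTop, ‖x B r‖ ≤ |c| / (2 * B) := by
    filter_upwards [eventually_gt_atTop (0:ℝ)] with B hB
    have heq := hx B hB r hr
    rw [hc] at heq
    have hs2 : Real.sqrt (B ^ 2 / 4) ≤ Real.sqrt (x B r ^ 2 + B ^ 2 / 4) :=
      Real.sqrt_le_sqrt (by nlinarith [sq_nonneg (x B r)])
    have hs3 : Real.sqrt (B ^ 2 / 4) = B / 2 := by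
      rw [show B ^ 2 / 4 = (B / 2) ^ 2 by ring, Real.sqrt_sq (by positivity)]
    have hpos : (0:ℝ) < 2 * Real.sqrt (x B r ^ 2 + B ^ 2 / 4) + B := by
      nlinarith [Real.sqrt_nonneg (x B r ^ 2 + B ^ 2 / 4)]
    have habs : |c| = (2 * Real.sqrt (x B r ^ 2 + B ^ 2 / 4) + B) * |x B r| := by
      rw [← heq, abs_mul, abs_of_pos hpos]
    rw [Real.norm_eq_abs, le_div_iff₀ (by positivity)]
    nlinarith [abs_nonneg (x B r)]
  have hx0 : Tendsto (fun B => x B r) atTop (𝓝 0) := by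
    apply squeeze_zero_norm' hbound
    exact tendsto_const_nhds.div_atTop (Tendsto.const_mul_atTop two_pos tendsto_id)
  -- B * x B r → c / 2
  have hid : ∀ᶠ B in atTop, B * x B r = c / 2 - 2 * (x B r) ^ 4 / c := by
    filter_upwards [eventually_gt_atTop (0:ℝ)] with B hB
    have heq := hx B hB r hr
    rw [hc] at heq
    exact stmt3_algebra1 B (x B r) (Real.sqrt (x B r ^ 2 + B ^ 2 / 4)) c hcne
      (Real.sq_sqrt (by positivity)) heq
  have hBx' : Tendsto (fun B => B * x B r) atTop (𝓝 (c / 2)) := by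
    have h1 : Tendsto (fun B => c / 2 - 2 * (x B r) ^ 4 / c) atTop
        (𝓝 (c / 2 - 2 * (0:ℝ) ^ 4 / c)) :=
      tendsto_const_nhds.sub (((hx0.pow 4).const_mul 2).div_const c)
    have h2 : c / 2 - 2 * (0:ℝ) ^ 4 / c = c / 2 := by norm_num
    rw [h2] at h1
    exact h1.congr' (EventuallyEq.symm hid)
  have hval : Real.sign r * (Real.pi / (2 * γ)) * |r|⁻¹ = c / 2 := by
    have hvalaux : Real.pi / (γ * r) / 2 = Real.pi / (2 * γ) * r⁻¹ := by
      rw [div_div, show γ * r * 2 = 2 * γ * r by ring, ← div_div, div_eq_mul_inv]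
    rw [← hc, hvalaux]
    rcases hr.lt_or_gt with h | h
    · rw [Real.sign_of_neg h, abs_of_neg h, inv_neg]
      ring
    · rw [Real.sign_of_pos h, abs_of_pos h]
      ring
  -- derivative formula
  set D : ℝ → ℝ := fun B => 2 * Real.sqrt (x B r ^ 2 + B ^ 2 / 4)
      + 2 * (x B r) ^ 2 / Real.sqrt (x B r ^ 2 + B ^ 2 / 4) + B with hD
  have hderiv : ∀ᶠ B in atTop, deriv (x B) r = (D B)⁻¹ * (-(Real.pi / γ) / r ^ 2) := by
    filter_upwards [eventually_gt_atTop (0:ℝ)] with B hB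
    exact (stmt3_hasDerivAt γ hγ x hx B hB r hr).deriv
  have hu : Tendsto (fun B => x B r / B) atTop (𝓝 0) := hx0.div_atTop tendsto_id
  have hsq : Tendsto (fun B => Real.sqrt ((x B r / B) ^ 2 + 1 / 4)) atTop (𝓝 (1 / 2)) := by
    have h1 : Tendsto (fun B => (x B r / B) ^ 2 + 1 / 4) atTop (𝓝 ((0:ℝ) ^ 2 + 1 / 4)) :=
      (hu.pow 2).add tendsto_const_nhds
    have h2 := (Real.continuous_sqrt.tendsto ((0:ℝ) ^ 2 + 1 / 4)).comp h1
    have h3 : Real.sqrt ((0:ℝ) ^ 2 + 1 / 4) = 1 / 2 := by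
      rw [show (0:ℝ) ^ 2 + 1 / 4 = (1 / 2) ^ 2 by norm_num, Real.sqrt_sq (by norm_num)]
    rw [h3] at h2
    exact h2
  have hGid : ∀ᶠ B in atTop, D B / B =
      2 * Real.sqrt ((x B r / B) ^ 2 + 1 / 4)
        + 2 * (x B r / B) ^ 2 / Real.sqrt ((x B r / B) ^ 2 + 1 / 4) + 1 := by
    filter_upwards [eventually_gt_atTop (0:ℝ)] with B hB
    have halg := stmt3_algebra2 B (x B r) (Real.sqrt (x B r ^ 2 + B ^ 2 / 4)) hB
      (Real.sqrt_pos.mpr (by positivity)) (Real.sq_sqrt (by positivity))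
    rw [halg.1]
    exact halg.2
  have hG : Tendsto (fun B => D B / B) atTop (𝓝 2) := by
    have h1 : Tendsto (fun B =>
        2 * Real.sqrt ((x B r / B) ^ 2 + 1 / 4)
          + 2 * (x B r / B) ^ 2 / Real.sqrt ((x B r / B) ^ 2 + 1 / 4) + 1) atTop
        (𝓝 (2 * (1 / 2) + 2 * (0:ℝ) ^ 2 / (1 / 2) + 1)) :=
      ((hsq.const_mul 2).add (((hu.pow 2).const_mul 2).div hsq (by norm_num))).add
        tendsto_const_nhds
    have h2 : 2 * (1 / 2 : ℝ) + 2 * (0:ℝ) ^ 2 / (1 / 2) + 1 = 2 := by norm_num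
    rw [h2] at h1
    exact h1.congr' (EventuallyEq.symm hGid)
  have hDpos : ∀ᶠ B in atTop, 0 < D B := by
    filter_upwards [eventually_gt_atTop (0:ℝ)] with B hB
    have h1 : 0 < Real.sqrt (x B r ^ 2 + B ^ 2 / 4) := Real.sqrt_pos.mpr (by positivity)
    have h2 : (0:ℝ) ≤ 2 * (x B r) ^ 2 / Real.sqrt (x B r ^ 2 + B ^ 2 / 4) := by positivity
    simp only [hD]
    nlinarith
  have hBdid : ∀ᶠ B in atTop, B * deriv (x B) r
      = (-(Real.pi / γ) / r ^ 2) * (D B / B)⁻¹ := by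
    filter_upwards [hderiv, hDpos, eventually_gt_atTop (0:ℝ)] with B h1 h2 h3
    rw [h1]
    exact stmt3_algebra3 B (D B) _ h3 h2
  have hBd : Tendsto (fun B => B * deriv (x B) r) atTop
      (𝓝 ((-(Real.pi / γ) / r ^ 2) * 2⁻¹)) := by
    have h1 := (hG.inv₀ (by norm_num)).const_mul (-(Real.pi / γ) / r ^ 2)
    exact h1.congr' (EventuallyEq.symm hBdid)
  have hvald : -(Real.pi / (2 * γ)) * |r| ^ (-(2:ℝ)) = (-(Real.pi / γ) / r ^ 2) * 2⁻¹ := by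
    have h1 : |r| ^ (-(2:ℝ)) = (r ^ 2)⁻¹ := by
      rw [show (-(2:ℝ)) = ((-2 : ℤ) : ℝ) by norm_num, Real.rpow_intCast]
      rw [zpow_neg, show ((2:ℤ)) = ((2:ℕ) : ℤ) by norm_num, zpow_natCast, sq_abs]
    rw [h1]
    simp only [div_eq_mul_inv, mul_inv]
    ring
  have hd0 : Tendsto (fun B => deriv (x B) r) atTop (𝓝 0) := by
    have h1 := hBd.mul tendsto_inv_atTop_zero
    have h2 : ∀ᶠ B in atTop, (B * deriv (x B) r) * B⁻¹ = deriv (x B) r := by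
      filter_upwards [eventually_gt_atTop (0:ℝ)] with B hB
      field_simp
    have h3 := h1.congr' h2
    simpa using h3
  refine ⟨hx0, hd0, ?_, ?_⟩
  · rw [hval]; exact hBx'
  · rw [hvald]; exact hBd
end

section
/- Fix γ > 0 and set C = (π/(2γ))^{1/3}. For every fixed r ≠ 0, |x_{B,−}(r)| diverges to +∞ as B → +∞, and more precisely lim_{B→+∞} B^{−1/3}·x_{B,−}(r) = sign(r)·C·|r|^{−1/3} and lim_{B→+∞} B^{−1/3}·(d/dr)x_{B,−}(r) = −(C/3)·|r|^{−4/3}. -/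
open Filter Topology

private lemma cube_root_cube {a : ℝ} (ha : 0 ≤ a) : (a ^ 3) ^ ((1:ℝ)/3) = a := by
  rw [← Real.rpow_natCast a 3, ← Real.rpow_mul ha]
  norm_num

private lemma cube_inj {a b : ℝ} (ha : 0 ≤ a) (hb : 0 ≤ b) (h : a ^ 3 = b ^ 3) : a = b :=
  calc a = (a ^ 3) ^ ((1:ℝ)/3) := (cube_root_cube ha).symm
    _ = (b ^ 3) ^ ((1:ℝ)/3) := by rw [h]
    _ = b := cube_root_cube hb

set_option maxHeartbeats 1000000 in
private lemma key (γ : ℝ) (hγ : 0 < γ) (x : ℝ → ℝ → ℝ)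
    (hx : ∀ B : ℝ, 0 < B → ∀ r : ℝ, r ≠ 0 →
      (2 * Real.sqrt (x B r ^ 2 + B ^ 2 / 4) - B) * x B r = Real.pi / (γ * r))
    (r : ℝ) (hr : 0 < r) :
    Tendsto (fun B => |x B r|) atTop atTop ∧
      Tendsto (fun B => B ^ (-(1 / 3 : ℝ)) * x B r) atTop
        (𝓝 (Real.sign r * (Real.pi / (2 * γ)) ^ ((1 : ℝ) / 3) * |r| ^ (-(1 / 3 : ℝ)))) ∧
      Tendsto (fun B => B ^ (-(1 / 3 : ℝ)) * deriv (x B) r) atTop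
        (𝓝 (-((Real.pi / (2 * γ)) ^ ((1 : ℝ) / 3) / 3) * |r| ^ (-(4 / 3 : ℝ)))) := by
  have hπ := Real.pi_pos
  set c : ℝ := Real.pi / (γ * r) with hc_def
  have hc : 0 < c := div_pos hπ (mul_pos hγ hr)
  clear_value c
  -- positivity of x B s for s > 0
  have hpos : ∀ B : ℝ, 0 < B → ∀ s : ℝ, 0 < s → 0 < x B s := by
    intro B hB s hs
    have h := hx B hB s hs.ne'
    have hq : 0 < Real.pi / (γ * s) := div_pos hπ (mul_pos hγ hs)
    have hA : 0 ≤ 2 * Real.sqrt (x B s ^ 2 + B ^ 2 / 4) - B := by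
      have h1 : Real.sqrt (B ^ 2 / 4) ≤ Real.sqrt (x B s ^ 2 + B ^ 2 / 4) :=
        Real.sqrt_le_sqrt (by nlinarith [sq_nonneg (x B s)])
      have h2 : Real.sqrt (B ^ 2 / 4) = B / 2 := by
        rw [show B ^ 2 / 4 = (B / 2) ^ 2 by ring, Real.sqrt_sq (by linarith)]
      linarith
    rcases lt_trichotomy (x B s) 0 with hlt | heq | hgt
    · exfalso
      have h3 := mul_nonpos_of_nonneg_of_nonpos hA hlt.le
      rw [h] at h3
      linarith
    · exfalso
      rw [heq, mul_zero] at h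
      linarith
    · exact hgt
  -- quartic identity
  have hquart : ∀ B : ℝ, 0 < B → 4 * (x B r) ^ 4 = c ^ 2 + 2 * B * c * x B r := by
    intro B hB
    have h := hx B hB r hr.ne'
    rw [← hc_def] at h
    have hs : Real.sqrt (x B r ^ 2 + B ^ 2 / 4) ^ 2 = x B r ^ 2 + B ^ 2 / 4 :=
      Real.sq_sqrt (by positivity)
    have h3 : (2 * x B r * Real.sqrt (x B r ^ 2 + B ^ 2 / 4)) ^ 2 = (c + B * x B r) ^ 2 := by
      rw [show 2 * x B r * Real.sqrt (x B r ^ 2 + B ^ 2 / 4) = c + B * x B r by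
        linear_combination h]
    linear_combination h3 - 4 * (x B r) ^ 2 * hs
  -- lower bound
  have hlb : ∀ B : ℝ, 0 < B → B * (c / 2) ≤ (x B r) ^ 3 := by
    intro B hB
    have hq := hquart B hB
    have hx0 := hpos B hB r hr
    have hkey : ((x B r) ^ 3 - B * (c / 2)) * (4 * x B r) = c ^ 2 := by
      linear_combination hq
    nlinarith [hkey, hx0, sq_nonneg c]
  -- tendsto atTop
  have hgrow : Tendsto (fun B : ℝ => (B * (c / 2)) ^ ((1:ℝ)/3)) atTop atTop :=
    (tendsto_rpow_atTop (by norm_num : (0:ℝ) < 1/3)).comp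
      (Tendsto.atTop_mul_const (by positivity) tendsto_id)
  have hxlow : ∀ᶠ B in atTop, (B * (c / 2)) ^ ((1:ℝ)/3) ≤ x B r := by
    filter_upwards [eventually_gt_atTop 0] with B hB
    have hx0 := hpos B hB r hr
    calc (B * (c / 2)) ^ ((1:ℝ)/3) ≤ ((x B r) ^ 3) ^ ((1:ℝ)/3) :=
          Real.rpow_le_rpow (by positivity) (hlb B hB) (by norm_num)
      _ = x B r := cube_root_cube hx0.le
  have hxtop : Tendsto (fun B => x B r) atTop atTop := tendsto_atTop_mono' atTop hxlow hgrow
  have part1 : Tendsto (fun B => |x B r|) atTop atTop := tendsto_abs_atTop_atTop.comp hxtop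
  -- cube limit
  have hBx : Tendsto (fun B : ℝ => B * x B r) atTop atTop := tendsto_id.atTop_mul_atTop₀ hxtop
  have hsmall : Tendsto (fun B : ℝ => c ^ 2 / (4 * (B * x B r))) atTop (𝓝 0) := by
    have h1 := hBx.inv_tendsto_atTop.const_mul (c ^ 2 / 4)
    rw [mul_zero] at h1
    exact h1.congr fun B => by simp only [Pi.inv_apply]; ring
  have hcube : Tendsto (fun B => (x B r) ^ 3 / B) atTop (𝓝 (c / 2)) := by
    have h1 : Tendsto (fun B : ℝ => c / 2 + c ^ 2 / (4 * (B * x B r))) atTop (𝓝 (c / 2 + 0)) :=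
      tendsto_const_nhds.add hsmall
    rw [add_zero] at h1
    apply h1.congr'
    filter_upwards [eventually_gt_atTop 0] with B hB
    have hx0 := hpos B hB r hr
    have hq := hquart B hB
    rw [div_add_div _ _ (by norm_num) (by positivity), div_eq_div_iff (by positivity) hB.ne']
    linear_combination (-2 : ℝ) * B * hq
  -- part 2
  set L : ℝ := (c / 2) ^ ((1:ℝ)/3) with hL_def
  have hLpos : 0 < L := Real.rpow_pos_of_pos (by positivity) _
  have hw : Tendsto (fun B => B ^ (-(1 / 3 : ℝ)) * x B r) atTop (𝓝 L) := by
    have hcont : ContinuousAt (fun y : ℝ => y ^ ((1:ℝ)/3)) (c / 2) :=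
      Real.continuousAt_rpow_const _ _ (Or.inl (by positivity))
    have h1 := hcont.tendsto.comp hcube
    apply h1.congr'
    filter_upwards [eventually_gt_atTop 0] with B hB
    have hx0 := hpos B hB r hr
    show ((x B r) ^ 3 / B) ^ ((1:ℝ)/3) = B ^ (-(1 / 3 : ℝ)) * x B r
    rw [Real.div_rpow (by positivity) hB.le, cube_root_cube hx0.le, Real.rpow_neg hB.le]
    ring
  have hconst2 : Real.sign r * (Real.pi / (2 * γ)) ^ ((1 : ℝ) / 3) * |r| ^ (-(1 / 3 : ℝ)) = L := by
    rw [Real.sign_of_pos hr, abs_of_pos hr, one_mul, hL_def]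
    rw [show c / 2 = (Real.pi / (2 * γ)) * r⁻¹ by
      rw [hc_def]; field_simp]
    rw [Real.mul_rpow (by positivity) (by positivity), Real.inv_rpow hr.le,
        ← Real.rpow_neg hr.le]
  have part2 : Tendsto (fun B => B ^ (-(1 / 3 : ℝ)) * x B r) atTop
      (𝓝 (Real.sign r * (Real.pi / (2 * γ)) ^ ((1 : ℝ) / 3) * |r| ^ (-(1 / 3 : ℝ)))) := by
    rw [hconst2]; exact hw
  -- derivative formula
  have hderiv : ∀ B : ℝ, 0 < B →
      deriv (x B) r = -(γ * c ^ 2) /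
        (Real.pi * (2 * (x B r) ^ 2 / Real.sqrt ((x B r) ^ 2 + B ^ 2 / 4)
          + (2 * Real.sqrt ((x B r) ^ 2 + B ^ 2 / 4) - B))) := by
    intro B hB
    set f : ℝ → ℝ := fun t => (2 * Real.sqrt (t ^ 2 + B ^ 2 / 4) - B) * t with hf_def
    have hspos : ∀ t : ℝ, 0 < Real.sqrt (t ^ 2 + B ^ 2 / 4) :=
      fun t => Real.sqrt_pos.mpr (by positivity)
    have hsB : ∀ t : ℝ, B / 2 ≤ Real.sqrt (t ^ 2 + B ^ 2 / 4) := by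
      intro t
      have h2 : Real.sqrt (B ^ 2 / 4) = B / 2 := by
        rw [show B ^ 2 / 4 = (B / 2) ^ 2 by ring, Real.sqrt_sq (by linarith)]
      rw [← h2]
      exact Real.sqrt_le_sqrt (by nlinarith [sq_nonneg t])
    have hfd : ∀ t : ℝ, HasDerivAt f
        (2 * t ^ 2 / Real.sqrt (t ^ 2 + B ^ 2 / 4)
          + (2 * Real.sqrt (t ^ 2 + B ^ 2 / 4) - B)) t := by
      intro t
      have h1 : HasDerivAt (fun t : ℝ => t ^ 2 + B ^ 2 / 4) (2 * t) t := by
        simpa using (hasDerivAt_pow 2 t).add_const (B ^ 2 / 4)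
      have h2 : HasDerivAt (fun t : ℝ => Real.sqrt (t ^ 2 + B ^ 2 / 4))
          (1 / (2 * Real.sqrt (t ^ 2 + B ^ 2 / 4)) * (2 * t)) t :=
        (Real.hasDerivAt_sqrt (by positivity)).comp t h1
      have h3 := ((h2.const_mul 2).sub_const B).mul (hasDerivAt_id t)
      refine h3.congr_deriv ?_
      have hst := hspos t
      simp only [id]
      ring
    have hcontf : Continuous f := by
      exact ((continuous_const.mul (Real.continuous_sqrt.comp
        ((continuous_pow 2).add continuous_const))).sub continuous_const).mul continuous_id
    have hmono : StrictMono f := by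
      have hIci : StrictMonoOn f (Set.Ici (0:ℝ)) := by
        apply strictMonoOn_of_deriv_pos (convex_Ici 0) hcontf.continuousOn
        intro t ht
        rw [interior_Ici] at ht
        rw [(hfd t).deriv]
        have h1 := hspos t
        have h2 := hsB t
        have ht2 : 0 < t ^ 2 := pow_pos ht 2
        have h3 : 0 < 2 * t ^ 2 / Real.sqrt (t ^ 2 + B ^ 2 / 4) := by positivity
        linarith
      have hIic : StrictMonoOn f (Set.Iic (0:ℝ)) := by
        apply strictMonoOn_of_deriv_pos (convex_Iic 0) hcontf.continuousOn
        intro t ht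
        rw [interior_Iic] at ht
        rw [(hfd t).deriv]
        have h1 := hspos t
        have h2 := hsB t
        have ht2 : 0 < t ^ 2 := pow_two_pos_of_ne_zero (ne_of_lt ht)
        have h3 : 0 < 2 * t ^ 2 / Real.sqrt (t ^ 2 + B ^ 2 / 4) := by positivity
        linarith
      exact StrictMonoOn.Iic_union_Ici hIic hIci
    have htop : Tendsto f atTop atTop := by
      apply tendsto_atTop_mono' atTop ?_ tendsto_id
      filter_upwards [eventually_ge_atTop (B + 1)] with t ht
      have ht0 : 0 < t := by linarith
      have hs1 : Real.sqrt (t ^ 2) ≤ Real.sqrt (t ^ 2 + B ^ 2 / 4) :=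
        Real.sqrt_le_sqrt (by nlinarith)
      have hs2 : Real.sqrt (t ^ 2) = t := Real.sqrt_sq ht0.le
      have hfac : (1:ℝ) ≤ 2 * Real.sqrt (t ^ 2 + B ^ 2 / 4) - B := by linarith
      show t ≤ f t
      simp only [hf_def]
      nlinarith [mul_nonneg (by linarith : (0:ℝ) ≤ 2 * Real.sqrt (t ^ 2 + B ^ 2 / 4) - B - 1)
        ht0.le]
    have hbot : Tendsto f atBot atBot := by
      apply tendsto_atBot_mono' atBot ?_ tendsto_id
      filter_upwards [eventually_le_atBot (-(B + 1))] with t ht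
      have ht0 : t < 0 := by linarith
      have hs1 : Real.sqrt (t ^ 2) ≤ Real.sqrt (t ^ 2 + B ^ 2 / 4) :=
        Real.sqrt_le_sqrt (by nlinarith)
      have hs2 : Real.sqrt (t ^ 2) = -t := by
        rw [Real.sqrt_sq_eq_abs, abs_of_neg ht0]
      have hfac : (1:ℝ) ≤ 2 * Real.sqrt (t ^ 2 + B ^ 2 / 4) - B := by linarith
      show f t ≤ t
      simp only [hf_def]
      nlinarith [mul_nonneg (by linarith : (0:ℝ) ≤ 2 * Real.sqrt (t ^ 2 + B ^ 2 / 4) - B - 1)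
        (by linarith : (0:ℝ) ≤ -t)]
    have hsurj : Function.Surjective f := hcontf.surjective htop hbot
    have hcoe : ∀ t, StrictMono.orderIsoOfSurjective f hmono hsurj t = f t :=
      fun t => congrFun (StrictMono.coe_orderIsoOfSurjective f hmono hsurj) t
    set e := StrictMono.orderIsoOfSurjective f hmono hsurj with he_def
    have hinv : ∀ s : ℝ, s ≠ 0 → x B s = e.symm (Real.pi / (γ * s)) := by
      intro s hs
      have h := hx B hB s hs
      have h2 : e (x B s) = Real.pi / (γ * s) := by rw [hcoe]; exact h
      rw [← h2, OrderIso.symm_apply_apply]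
    have hcontx : ContinuousAt (x B) r := by
      have h1 : ContinuousAt (fun s : ℝ => e.symm (Real.pi / (γ * s))) r := by
        apply (OrderIso.continuous e.symm).continuousAt.comp
        exact ContinuousAt.div continuousAt_const (continuousAt_const.mul continuousAt_id)
          (mul_pos hγ hr).ne'
      apply h1.congr
      filter_upwards [eventually_ne_nhds hr.ne'] with s hs
      exact (hinv s hs).symm
    have hX := hpos B hB r hr
    have hfX : f (x B r) = c := by
      simp only [hf_def]
      rw [hc_def]
      exact hx B hB r hr.ne'
    have hSpos := hspos (x B r)
    have hSB := hsB (x B r)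
    have hF'pos : 0 < 2 * (x B r) ^ 2 / Real.sqrt ((x B r) ^ 2 + B ^ 2 / 4)
        + (2 * Real.sqrt ((x B r) ^ 2 + B ^ 2 / 4) - B) := by
      have h3 : 0 < 2 * (x B r) ^ 2 / Real.sqrt ((x B r) ^ 2 + B ^ 2 / 4) := by positivity
      linarith
    have hφ : HasDerivAt (fun s : ℝ => Real.pi * (γ * f s)⁻¹)
        (Real.pi * (-(γ * (2 * (x B r) ^ 2 / Real.sqrt ((x B r) ^ 2 + B ^ 2 / 4)
          + (2 * Real.sqrt ((x B r) ^ 2 + B ^ 2 / 4) - B))) / (γ * f (x B r)) ^ 2)) (x B r) :=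
      ((((hfd (x B r)).const_mul γ).inv (by rw [hfX]; exact (mul_pos hγ hc).ne')).const_mul
        Real.pi)
    rw [hfX] at hφ
    have hne : Real.pi * (-(γ * (2 * (x B r) ^ 2 / Real.sqrt ((x B r) ^ 2 + B ^ 2 / 4)
        + (2 * Real.sqrt ((x B r) ^ 2 + B ^ 2 / 4) - B))) / (γ * c) ^ 2) ≠ 0 := by
      have h1 : 0 < γ * (2 * (x B r) ^ 2 / Real.sqrt ((x B r) ^ 2 + B ^ 2 / 4)
          + (2 * Real.sqrt ((x B r) ^ 2 + B ^ 2 / 4) - B)) := mul_pos hγ hF'pos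
      have h2 : (0:ℝ) < (γ * c) ^ 2 := pow_pos (mul_pos hγ hc) 2
      exact (mul_neg_of_pos_of_neg hπ (div_neg_of_neg_of_pos (by linarith) h2)).ne
    have hleft : ∀ᶠ s in 𝓝 r, (fun s : ℝ => Real.pi * (γ * f s)⁻¹) (x B s) = s := by
      filter_upwards [eventually_ne_nhds hr.ne'] with s hs
      have h := hx B hB s hs
      show Real.pi * (γ * f (x B s))⁻¹ = s
      have hfs : f (x B s) = Real.pi / (γ * s) := by simp only [hf_def]; exact h
      rw [hfs]
      field_simp
    have hD := HasDerivAt.of_local_left_inverse hcontx hφ hne hleft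
    rw [hD.deriv]
    set F' : ℝ := 2 * x B r ^ 2 / Real.sqrt (x B r ^ 2 + B ^ 2 / 4)
      + (2 * Real.sqrt (x B r ^ 2 + B ^ 2 / 4) - B) with hF'_def
    clear_value F'
    field_simp [hF'pos.ne', hγ.ne', hc.ne', hπ.ne']
  -- x/B tends to 0
  have hxoB : Tendsto (fun B => x B r / B) atTop (𝓝 0) := by
    have hsq : Tendsto (fun B => x B r * x B r) atTop atTop := hxtop.atTop_mul_atTop₀ hxtop
    have h1 := hcube.div_atTop hsq
    apply h1.congr'
    filter_upwards [eventually_gt_atTop 0] with B hB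
    have hx0 := hpos B hB r hr
    field_simp
  have hv : Tendsto (fun B => Real.sqrt ((x B r / B) ^ 2 + 1/4)) atTop (𝓝 (1/2)) := by
    have hcont : Continuous (fun y : ℝ => Real.sqrt (y ^ 2 + 1/4)) :=
      Real.continuous_sqrt.comp (by continuity)
    have h1 := (hcont.tendsto 0).comp hxoB
    have h2 : Real.sqrt ((0:ℝ) ^ 2 + 1/4) = 1/2 := by
      rw [show (0:ℝ) ^ 2 + 1/4 = (1/2) ^ 2 by norm_num, Real.sqrt_sq (by norm_num)]
    simp only [Function.comp_def] at h1
    rw [h2] at h1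
    exact h1
  -- limit of the scaled derivative expression
  have hG : Tendsto (fun B => -(γ * c ^ 2) / (Real.pi *
      (4 * (B ^ (-(1 / 3 : ℝ)) * x B r) ^ 2 / (2 * Real.sqrt ((x B r / B) ^ 2 + 1/4) + 1)
       + 2 * (B ^ (-(1 / 3 : ℝ)) * x B r) ^ 2 / Real.sqrt ((x B r / B) ^ 2 + 1/4)))) atTop
      (𝓝 (-(γ * c ^ 2) / (Real.pi *
        (4 * L ^ 2 / (2 * (1/2 : ℝ) + 1) + 2 * L ^ 2 / (1/2 : ℝ))))) := by
    apply Tendsto.div tendsto_const_nhds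
    · apply Tendsto.const_mul
      apply Tendsto.add
      · exact Tendsto.div ((hw.pow 2).const_mul 4) ((hv.const_mul 2).add_const 1)
          (by norm_num)
      · exact Tendsto.div ((hw.pow 2).const_mul 2) hv (by norm_num)
    · exact ne_of_gt (by nlinarith [mul_pos hπ (pow_pos hLpos 2)])
  -- eventual equality with B^{-1/3} * deriv
  have hfinal_eq : ∀ᶠ B in atTop,
      -(γ * c ^ 2) / (Real.pi *
      (4 * (B ^ (-(1 / 3 : ℝ)) * x B r) ^ 2 / (2 * Real.sqrt ((x B r / B) ^ 2 + 1/4) + 1)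
       + 2 * (B ^ (-(1 / 3 : ℝ)) * x B r) ^ 2 / Real.sqrt ((x B r / B) ^ 2 + 1/4)))
      = B ^ (-(1 / 3 : ℝ)) * deriv (x B) r := by
    filter_upwards [eventually_gt_atTop 0] with B hB
    have hx0 := hpos B hB r hr
    rw [hderiv B hB]
    have hbpos : (0:ℝ) < B ^ ((1:ℝ)/3) := Real.rpow_pos_of_pos hB _
    set b : ℝ := B ^ ((1:ℝ)/3) with hb_def
    have hb3 : b ^ 3 = B := by
      rw [hb_def, ← Real.rpow_natCast (B ^ ((1:ℝ)/3)) 3, ← Real.rpow_mul hB.le]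
      norm_num
    have hBneg : B ^ (-(1 / 3 : ℝ)) = b⁻¹ := by
      rw [hb_def, ← Real.rpow_neg_one (B ^ ((1:ℝ)/3)), ← Real.rpow_mul hB.le]
      norm_num
    set V : ℝ := Real.sqrt ((x B r / B) ^ 2 + 1/4) with hV_def
    have hVpos : 0 < V := Real.sqrt_pos.mpr (by positivity)
    have hVhalf : 1/2 ≤ V := by
      rw [hV_def, show (1:ℝ)/2 = Real.sqrt (1/4) by
        rw [show (1:ℝ)/4 = (1/2) ^ 2 by norm_num, Real.sqrt_sq (by norm_num)]]
      exact Real.sqrt_le_sqrt (by nlinarith [sq_nonneg (x B r / B)])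
    have hS : Real.sqrt ((x B r) ^ 2 + B ^ 2 / 4) = B * V := by
      rw [hV_def, show (x B r) ^ 2 + B ^ 2 / 4 = B ^ 2 * ((x B r / B) ^ 2 + 1/4) by
        field_simp, Real.sqrt_mul (sq_nonneg B), Real.sqrt_sq hB.le]
    have hV2 : V ^ 2 = (x B r / B) ^ 2 + 1/4 := Real.sq_sqrt (by positivity)
    have hbne : b ≠ 0 := ne_of_gt hbpos
    rw [hS, hBneg]
    have hwsq : (b⁻¹ * x B r) ^ 2 = x B r ^ 2 / b ^ 2 := by
      rw [mul_pow, inv_pow, div_eq_mul_inv, mul_comm]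
    simp only [hwsq]
    have hDA : 4 * (x B r ^ 2 / b ^ 2) / (2 * V + 1) + 2 * (x B r ^ 2 / b ^ 2) / V
        = (2 * x B r ^ 2 / (B * V) + (2 * (B * V) - B)) * b := by
      have h2V1 : (0:ℝ) < 2 * V + 1 := by linarith
      have hV2p : B ^ 2 * V ^ 2 = x B r ^ 2 + B ^ 2 / 4 := by
        rw [hV2]; field_simp
      rw [← hb3] at hV2p ⊢
      field_simp [hbne, hVpos.ne', h2V1.ne']
      linear_combination (-4 : ℝ) * V * hV2p
    rw [show b⁻¹ * (-(γ * c ^ 2) / (Real.pi * (2 * x B r ^ 2 / (B * V) + (2 * (B * V) - B))))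
        = -(γ * c ^ 2) / (Real.pi * ((2 * x B r ^ 2 / (B * V) + (2 * (B * V) - B)) * b)) by
      rw [inv_mul_eq_div, div_div, mul_assoc]]
    rw [hDA]
  -- final constant computation
  have hval : -(γ * c ^ 2) / (Real.pi *
        (4 * L ^ 2 / (2 * (1/2 : ℝ) + 1) + 2 * L ^ 2 / (1/2 : ℝ)))
      = -((Real.pi / (2 * γ)) ^ ((1 : ℝ) / 3) / 3) * |r| ^ (-(4 / 3 : ℝ)) := by
    set P : ℝ := (Real.pi / (2 * γ)) ^ ((1:ℝ)/3) with hP_def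
    set ρ : ℝ := r ^ ((1:ℝ)/3) with hρ_def
    have hρpos : 0 < ρ := Real.rpow_pos_of_pos hr _
    have hPpos : 0 < P := Real.rpow_pos_of_pos (by positivity) _
    have hL3 : L ^ 3 = c / 2 := by
      rw [hL_def, ← Real.rpow_natCast ((c/2) ^ ((1:ℝ)/3)) 3, ← Real.rpow_mul (by positivity)]
      norm_num
    have hρ3 : ρ ^ 3 = r := by
      rw [hρ_def, ← Real.rpow_natCast (r ^ ((1:ℝ)/3)) 3, ← Real.rpow_mul hr.le]
      norm_num
    have hP3 : P ^ 3 = Real.pi / (2 * γ) := by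
      rw [hP_def, ← Real.rpow_natCast ((Real.pi / (2*γ)) ^ ((1:ℝ)/3)) 3,
        ← Real.rpow_mul (by positivity)]
      norm_num
    have hLρ : L * ρ = P := by
      apply cube_inj (by positivity) hPpos.le
      rw [mul_pow, hL3, hρ3, hP3, hc_def]
      field_simp
    have h4 : ρ ^ 4 = r ^ ((4:ℝ)/3) := by
      rw [hρ_def, ← Real.rpow_natCast (r ^ ((1:ℝ)/3)) 4, ← Real.rpow_mul hr.le]
      norm_num
    have habs4 : |r| ^ (-(4 / 3 : ℝ)) = (ρ ^ 4)⁻¹ := by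
      rw [h4, abs_of_pos hr, Real.rpow_neg hr.le]
    rw [habs4, ← hLρ]
    have hγrc : γ * r * c = Real.pi := by rw [hc_def]; field_simp
    rw [← hγrc, ← hρ3, show c = 2 * L ^ 3 by linarith]
    field_simp
    ring
  have part3 : Tendsto (fun B => B ^ (-(1 / 3 : ℝ)) * deriv (x B) r) atTop
      (𝓝 (-((Real.pi / (2 * γ)) ^ ((1 : ℝ) / 3) / 3) * |r| ^ (-(4 / 3 : ℝ)))) := by
    have h1 := hG.congr' hfinal_eq
    rw [hval] at h1
    exact h1
  exact ⟨part1, part2, part3⟩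

/-- Fix `γ > 0` and set `C = (π/(2γ))^(1/3)`.  For every fixed `r ≠ 0`,
`|x_{B,-}(r)| → +∞` as `B → +∞`, and more precisely
`B^(-1/3)·x_{B,-}(r) → sign(r)·C·|r|^(-1/3)` and
`B^(-1/3)·(d/dr)x_{B,-}(r) → -(C/3)·|r|^(-4/3)`. -/
theorem stmt_4 (γ : ℝ) (hγ : 0 < γ)
    (x : ℝ → ℝ → ℝ)
    (hx : ∀ B : ℝ, 0 < B → ∀ r : ℝ, r ≠ 0 →
      (2 * Real.sqrt (x B r ^ 2 + B ^ 2 / 4) - B) * x B r = Real.pi / (γ * r)) :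
    ∀ r : ℝ, r ≠ 0 →
      Tendsto (fun B => |x B r|) atTop atTop ∧
      Tendsto (fun B => B ^ (-(1 / 3 : ℝ)) * x B r) atTop
        (𝓝 (Real.sign r * (Real.pi / (2 * γ)) ^ ((1 : ℝ) / 3) * |r| ^ (-(1 / 3 : ℝ)))) ∧
      Tendsto (fun B => B ^ (-(1 / 3 : ℝ)) * deriv (x B) r) atTop
        (𝓝 (-((Real.pi / (2 * γ)) ^ ((1 : ℝ) / 3) / 3) * |r| ^ (-(4 / 3 : ℝ)))) := by
  intro r hr0
  rcases hr0.lt_or_gt with hneg | hpos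
  · -- r < 0 : use the symmetry s ↦ -x B (-s)
    set y : ℝ → ℝ → ℝ := fun B s => -x B (-s) with hy_def
    have hy : ∀ B : ℝ, 0 < B → ∀ s : ℝ, s ≠ 0 →
        (2 * Real.sqrt (y B s ^ 2 + B ^ 2 / 4) - B) * y B s = Real.pi / (γ * s) := by
      intro B hB s hs
      have h := hx B hB (-s) (neg_ne_zero.mpr hs)
      simp only [hy_def]
      rw [show (-x B (-s)) ^ 2 = (x B (-s)) ^ 2 by ring,
        show (2 * Real.sqrt (x B (-s) ^ 2 + B ^ 2 / 4) - B) * -x B (-s)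
          = -((2 * Real.sqrt (x B (-s) ^ 2 + B ^ 2 / 4) - B) * x B (-s)) by ring,
        h, mul_neg, div_neg, neg_neg]
    obtain ⟨h1, h2, h3⟩ := key γ hγ y hy (-r) (by linarith)
    have hyx : ∀ B, y B (-r) = -x B r := fun B => by simp [hy_def]
    refine ⟨?_, ?_, ?_⟩
    · apply h1.congr
      intro B
      rw [hyx B, abs_neg]
    · have hpt : -(Real.sign (-r) * (Real.pi / (2 * γ)) ^ ((1 : ℝ) / 3)
          * |(-r)| ^ (-(1 / 3 : ℝ)))
          = Real.sign r * (Real.pi / (2 * γ)) ^ ((1 : ℝ) / 3) * |r| ^ (-(1 / 3 : ℝ)) := by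
        rw [Real.sign_of_pos (by linarith : (0:ℝ) < -r), Real.sign_of_neg hneg, abs_neg]
        ring
      rw [← hpt]
      exact Tendsto.congr (fun B => by rw [hyx B]; ring) h2.neg
    · have hyder : ∀ B, deriv (y B) (-r) = deriv (x B) r := by
        intro B
        have hcomp : deriv (fun s => x B (-s)) (-r) = -deriv (x B) r := by
          rw [deriv_comp_neg (x B) (-r), neg_neg]
        calc deriv (y B) (-r) = -deriv (fun s => x B (-s)) (-r) := deriv.neg
          _ = deriv (x B) r := by rw [hcomp, neg_neg]
      have h3' := Tendsto.congr (fun B => by rw [hyder B]) h3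
      rw [abs_neg] at h3'
      exact h3'
  · exact key γ hγ x hx r hpos
end

section
/- For every γ > 0 and B > 0, the functions h_{B,+} and h_{B,−} are differentiable at every r ≠ 0, and the functions g_{B,+} and g_{B,−} are positive even functions on ℝ \ {0}: for every r ≠ 0 one has g_{B,±}(−r) = g_{B,±}(r) and g_{B,±}(r) > 0. -/
open MeasureTheory Filter Set

noncomputable section StmtAux

/-- The function `F(t) = (2√(t²+B²/4) + εB) t`. -/
def Fb (B ε t : ℝ) : ℝ := (2 * Real.sqrt (t ^ 2 + B ^ 2 / 4) + ε * B) * t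

/-- Its derivative. -/
def Fb' (B ε t : ℝ) : ℝ :=
  2 * Real.sqrt (t ^ 2 + B ^ 2 / 4) + 2 * t ^ 2 / Real.sqrt (t ^ 2 + B ^ 2 / 4) + ε * B

variable {B ε : ℝ}

lemma sq_add_pos (hB : 0 < B) (t : ℝ) : 0 < t ^ 2 + B ^ 2 / 4 := by positivity

lemma sqrtq_pos (hB : 0 < B) (t : ℝ) : 0 < Real.sqrt (t ^ 2 + B ^ 2 / 4) :=
  Real.sqrt_pos.2 (sq_add_pos hB t)

lemma sqrtq_ge (hB : 0 < B) (t : ℝ) : B / 2 ≤ Real.sqrt (t ^ 2 + B ^ 2 / 4) := by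
  have h : B / 2 = Real.sqrt ((B / 2) ^ 2) := (Real.sqrt_sq (by positivity)).symm
  rw [h]
  exact Real.sqrt_le_sqrt (by nlinarith [sq_nonneg t])

lemma sqrtq_gt (hB : 0 < B) {t : ℝ} (ht : t ≠ 0) : B / 2 < Real.sqrt (t ^ 2 + B ^ 2 / 4) := by
  have h : B / 2 = Real.sqrt ((B / 2) ^ 2) := (Real.sqrt_sq (by positivity)).symm
  rw [h]
  exact Real.sqrt_lt_sqrt (by positivity) (by nlinarith [sq_pos_of_ne_zero ht])

lemma eps_abs (hε : ε = 1 ∨ ε = -1) : -1 ≤ ε ∧ ε ≤ 1 := by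
  rcases hε with h | h <;> simp [h]

lemma hasDerivAt_Fb (hB : 0 < B) (t : ℝ) : HasDerivAt (Fb B ε) (Fb' B ε t) t := by
  have hs := sqrtq_pos hB t
  have h1 : HasDerivAt (fun u : ℝ => u ^ 2 + B ^ 2 / 4) (2 * t) t := by
    simpa using (hasDerivAt_pow 2 t).add_const (B ^ 2 / 4)
  have h2 : HasDerivAt (fun u : ℝ => Real.sqrt (u ^ 2 + B ^ 2 / 4))
      (1 / (2 * Real.sqrt (t ^ 2 + B ^ 2 / 4)) * (2 * t)) t :=
    (Real.hasDerivAt_sqrt (ne_of_gt (sq_add_pos hB t))).comp t h1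
  have h3 : HasDerivAt (fun u : ℝ => 2 * Real.sqrt (u ^ 2 + B ^ 2 / 4) + ε * B)
      (2 * (1 / (2 * Real.sqrt (t ^ 2 + B ^ 2 / 4)) * (2 * t))) t :=
    (h2.const_mul 2).add_const _
  have h4 := h3.mul (hasDerivAt_id t)
  refine h4.congr_deriv ?_
  unfold Fb'
  simp only [id]
  field_simp
  ring

lemma Fb'_pos (hB : 0 < B) (hε : ε = 1 ∨ ε = -1) {t : ℝ} (ht : t ≠ 0) : 0 < Fb' B ε t := by
  obtain ⟨h1, h2⟩ := eps_abs hε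
  have hs := sqrtq_gt hB ht
  have hs0 := sqrtq_pos hB t
  have hterm : 0 < 2 * t ^ 2 / Real.sqrt (t ^ 2 + B ^ 2 / 4) := by
    apply div_pos (by positivity) hs0
  unfold Fb'
  nlinarith

lemma Fb'_nonneg (hB : 0 < B) (hε : ε = 1 ∨ ε = -1) (t : ℝ) : 0 ≤ Fb' B ε t := by
  obtain ⟨h1, h2⟩ := eps_abs hε
  have hs := sqrtq_ge hB t
  have hs0 := sqrtq_pos hB t
  have hterm : 0 ≤ 2 * t ^ 2 / Real.sqrt (t ^ 2 + B ^ 2 / 4) := by positivity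
  unfold Fb'
  nlinarith

lemma continuous_Fb : Continuous (Fb B ε) := by
  unfold Fb
  exact ((continuous_const.mul (Real.continuous_sqrt.comp (by continuity))).add
    continuous_const).mul continuous_id

lemma Fb_odd (t : ℝ) : Fb B ε (-t) = -Fb B ε t := by
  unfold Fb
  rw [neg_pow]
  ring_nf

lemma Fb_zero : Fb B ε 0 = 0 := by simp [Fb]

lemma strictMono_Fb (hB : 0 < B) (hε : ε = 1 ∨ ε = -1) : StrictMono (Fb B ε) := by
  have hderiv : ∀ t : ℝ, deriv (Fb B ε) t = Fb' B ε t := fun t => (hasDerivAt_Fb hB t).deriv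
  have h1 : StrictMonoOn (Fb B ε) (Set.Ici (0 : ℝ)) := by
    apply strictMonoOn_of_deriv_pos (convex_Ici 0) continuous_Fb.continuousOn
    intro t ht
    rw [interior_Ici] at ht
    rw [hderiv]
    exact Fb'_pos hB hε (ne_of_gt ht)
  have h2 : StrictMonoOn (Fb B ε) (Set.Iic (0 : ℝ)) := by
    apply strictMonoOn_of_deriv_pos (convex_Iic 0) continuous_Fb.continuousOn
    intro t ht
    rw [interior_Iic] at ht
    rw [hderiv]
    exact Fb'_pos hB hε (ne_of_lt ht)
  intro a b hab
  rcases le_total 0 a with ha | ha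
  · exact h1 ha (le_trans ha hab.le) hab
  · rcases le_total b 0 with hb | hb
    · exact h2 ha hb hab
    · rcases eq_or_lt_of_le ha with ha' | ha'
      · exact h1 (Set.mem_Ici.2 (le_of_eq ha'.symm)) (Set.mem_Ici.2 hb) hab
      · have h0a : Fb B ε a < Fb B ε 0 := h2 (Set.mem_Iic.2 ha) (Set.mem_Iic.2 le_rfl) ha'
        have h0b : Fb B ε 0 ≤ Fb B ε b := by
          rcases eq_or_lt_of_le hb with hb' | hb'
          · rw [← hb']
          · exact (h1 (Set.mem_Ici.2 le_rfl) (Set.mem_Ici.2 hb) hb').le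
        linarith

lemma tendsto_Fb_atTop (hB : 0 < B) (hε : ε = 1 ∨ ε = -1) :
    Tendsto (Fb B ε) atTop atTop := by
  obtain ⟨h1, h2⟩ := eps_abs hε
  apply tendsto_atTop_mono' atTop _ tendsto_id
  filter_upwards [eventually_ge_atTop (max B 1)] with t ht
  have htB : B ≤ t := le_trans (le_max_left _ _) ht
  have ht1 : (1:ℝ) ≤ t := le_trans (le_max_right _ _) ht
  have hsq : t ≤ Real.sqrt (t ^ 2 + B ^ 2 / 4) := by
    rw [Real.le_sqrt (by linarith) (by positivity)]
    nlinarith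
  show (t : ℝ) ≤ Fb B ε t
  unfold Fb
  have hεB : -B ≤ ε * B := by nlinarith
  have hprod : 0 ≤ (2 * Real.sqrt (t ^ 2 + B ^ 2 / 4) + ε * B - 1) * t :=
    mul_nonneg (by linarith) (by linarith)
  nlinarith [hprod]

lemma tendsto_Fb_atBot (hB : 0 < B) (hε : ε = 1 ∨ ε = -1) :
    Tendsto (Fb B ε) atBot atBot := by
  have h := (tendsto_Fb_atTop hB hε).comp tendsto_neg_atBot_atTop
  have h2 := tendsto_neg_atTop_atBot.comp h
  have : (fun t : ℝ => -(Fb B ε (-t))) = Fb B ε := by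
    funext t
    rw [Fb_odd, neg_neg]
  rwa [show (Neg.neg ∘ Fb B ε ∘ Neg.neg) = Fb B ε from this] at h2

lemma surjective_Fb (hB : 0 < B) (hε : ε = 1 ∨ ε = -1) : Function.Surjective (Fb B ε) :=
  continuous_Fb.surjective (tendsto_Fb_atTop hB hε) (tendsto_Fb_atBot hB hε)

/-- The inverse function of `Fb`. -/
def XI (B ε : ℝ) : ℝ → ℝ := Function.invFun (Fb B ε)

lemma Fb_XI (hB : 0 < B) (hε : ε = 1 ∨ ε = -1) (y : ℝ) : Fb B ε (XI B ε y) = y :=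
  Function.rightInverse_invFun (surjective_Fb hB hε) y

lemma XI_Fb (hB : 0 < B) (hε : ε = 1 ∨ ε = -1) (t : ℝ) : XI B ε (Fb B ε t) = t :=
  Function.leftInverse_invFun (strictMono_Fb hB hε).injective t

lemma continuous_XI (hB : 0 < B) (hε : ε = 1 ∨ ε = -1) : Continuous (XI B ε) := by
  have he : XI B ε = ⇑(StrictMono.orderIsoOfSurjective (Fb B ε) (strictMono_Fb hB hε)
      (surjective_Fb hB hε)).symm := by
    funext y
    apply (strictMono_Fb hB hε).injective
    rw [Fb_XI hB hε]
    exact (StrictMono.orderIsoOfSurjective_self_symm_apply _ _ _ y).symm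
  rw [he]
  exact OrderIso.continuous _

lemma XI_ne_zero (hB : 0 < B) (hε : ε = 1 ∨ ε = -1) {a : ℝ} (ha : a ≠ 0) : XI B ε a ≠ 0 := by
  intro h
  apply ha
  rw [← Fb_XI hB hε a, h, Fb_zero]

lemma XI_pos (hB : 0 < B) (hε : ε = 1 ∨ ε = -1) {a : ℝ} (ha : 0 < a) : 0 < XI B ε a := by
  have := (strictMono_Fb hB hε).lt_iff_lt (a := 0) (b := XI B ε a)
  rw [Fb_zero, Fb_XI hB hε] at this
  exact this.1 ha

lemma hasDerivAt_XI (hB : 0 < B) (hε : ε = 1 ∨ ε = -1) {a : ℝ} (ha : a ≠ 0) :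
    HasDerivAt (XI B ε) (Fb' B ε (XI B ε a))⁻¹ a :=
  HasDerivAt.of_local_left_inverse (continuous_XI hB hε).continuousAt
    (hasDerivAt_Fb hB (XI B ε a)) (ne_of_gt (Fb'_pos hB hε (XI_ne_zero hB hε ha)))
    (Eventually.of_forall (Fb_XI hB hε))

/-- `X(r) = F^{-1}(π/(γ r))`. -/
def XR (B ε γ : ℝ) (r : ℝ) : ℝ := XI B ε (Real.pi * (γ * r)⁻¹)

lemma XR_ne_zero (hB : 0 < B) (hε : ε = 1 ∨ ε = -1) {γ r : ℝ} (hγ : 0 < γ) (hr : r ≠ 0) :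
    XR B ε γ r ≠ 0 :=
  XI_ne_zero hB hε (by
    have : γ * r ≠ 0 := mul_ne_zero (ne_of_gt hγ) hr
    positivity)

lemma XR_pos (hB : 0 < B) (hε : ε = 1 ∨ ε = -1) {γ r : ℝ} (hγ : 0 < γ) (hr : 0 < r) :
    0 < XR B ε γ r :=
  XI_pos hB hε (by positivity)

lemma hasDerivAt_XR (hB : 0 < B) (hε : ε = 1 ∨ ε = -1) {γ r : ℝ} (hγ : 0 < γ) (hr : r ≠ 0) :
    HasDerivAt (XR B ε γ)
      ((Fb' B ε (XR B ε γ r))⁻¹ * (Real.pi * (-γ / (γ * r) ^ 2))) r := by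
  have hγr : γ * r ≠ 0 := mul_ne_zero (ne_of_gt hγ) hr
  have h1 : HasDerivAt (fun s : ℝ => γ * s) γ r := by
    simpa using (hasDerivAt_id r).const_mul γ
  have h2 : HasDerivAt (fun s : ℝ => (γ * s)⁻¹) (-γ / (γ * r) ^ 2) r := h1.inv hγr
  have h3 : HasDerivAt (fun s : ℝ => Real.pi * (γ * s)⁻¹)
      (Real.pi * (-γ / (γ * r) ^ 2)) r := h2.const_mul Real.pi
  have h4 : HasDerivAt (XI B ε) (Fb' B ε (XI B ε (Real.pi * (γ * r)⁻¹)))⁻¹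
      (Real.pi * (γ * r)⁻¹) :=
    hasDerivAt_XI hB hε (by positivity)
  exact h4.comp r h3

lemma XRderiv_neg (hB : 0 < B) (hε : ε = 1 ∨ ε = -1) {γ r : ℝ} (hγ : 0 < γ) (hr : r ≠ 0) :
    (Fb' B ε (XR B ε γ r))⁻¹ * (Real.pi * (-γ / (γ * r) ^ 2)) < 0 := by
  have h1 : 0 < (Fb' B ε (XR B ε γ r))⁻¹ :=
    inv_pos.2 (Fb'_pos hB hε (XR_ne_zero hB hε hγ hr))
  have hγr : γ * r ≠ 0 := mul_ne_zero (ne_of_gt hγ) hr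
  have h2 : Real.pi * (-γ / (γ * r) ^ 2) < 0 := by
    apply mul_neg_of_pos_of_neg Real.pi_pos
    apply div_neg_of_neg_of_pos (by linarith) (by positivity)
  exact mul_neg_of_pos_of_neg h1 h2

/-- The integrand. -/
def phiB (B ε t : ℝ) : ℝ := (1 / 2 + ε * B / (4 * Real.sqrt (t ^ 2 + B ^ 2 / 4))) * t ^ 2

lemma continuous_phiB (hB : 0 < B) : Continuous (phiB B ε) := by
  unfold phiB
  apply Continuous.mul _ (by continuity)
  apply continuous_const.add
  apply Continuous.div continuous_const (by continuity)
  intro t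
  have := sqrtq_pos hB t
  positivity

lemma phiB_pos (hB : 0 < B) (hε : ε = 1 ∨ ε = -1) {t : ℝ} (ht : t ≠ 0) : 0 < phiB B ε t := by
  obtain ⟨h1, h2⟩ := eps_abs hε
  have hs := sqrtq_gt hB ht
  have hs0 := sqrtq_pos hB t
  have hfac : 0 < 1 / 2 + ε * B / (4 * Real.sqrt (t ^ 2 + B ^ 2 / 4)) := by
    have hd : 0 < 4 * Real.sqrt (t ^ 2 + B ^ 2 / 4) := by positivity
    have key : B / (4 * Real.sqrt (t ^ 2 + B ^ 2 / 4)) < 1 / 2 := by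
      rw [div_lt_iff₀ hd]; nlinarith
    have h3 : (-B) / (4 * Real.sqrt (t ^ 2 + B ^ 2 / 4)) ≤
        ε * B / (4 * Real.sqrt (t ^ 2 + B ^ 2 / 4)) :=
      (div_le_div_iff_of_pos_right hd).2 (by nlinarith)
    rw [neg_div] at h3
    linarith
  exact mul_pos hfac (by positivity)

lemma phiB_even (t : ℝ) : phiB B ε (-t) = phiB B ε t := by
  unfold phiB
  rw [neg_pow]
  ring_nf

/-- Antiderivative. -/
def PhiB (B ε : ℝ) (u : ℝ) : ℝ := ∫ t in (0:ℝ)..u, phiB B ε t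

lemma hasDerivAt_PhiB (hB : 0 < B) (u : ℝ) : HasDerivAt (PhiB B ε) (phiB B ε u) u :=
  intervalIntegral.integral_hasDerivAt_right
    ((continuous_phiB hB).intervalIntegrable 0 u)
    (continuous_phiB hB).stronglyMeasurable.stronglyMeasurableAtFilter
    (continuous_phiB hB).continuousAt

end StmtAux

open MeasureTheory

/-- For `γ > 0` and `B > 0`, the functions `h_{B,±}` are differentiable at
every `r ≠ 0`, and the functions `g_{B,±}` are positive even functions on `ℝ \ {0}`. -/
theorem stmt_5 (γ B : ℝ) (hγ : 0 < γ) (hB : 0 < B)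
    (x h g : ℝ → ℝ → ℝ)
    (hx : ∀ ε : ℝ, (ε = 1 ∨ ε = -1) → ∀ r : ℝ, r ≠ 0 →
      (2 * Real.sqrt (x ε r ^ 2 + B ^ 2 / 4) + ε * B) * x ε r = Real.pi / (γ * r))
    (hh : ∀ ε : ℝ, (ε = 1 ∨ ε = -1) → ∀ r : ℝ, r ≠ 0 →
      h ε r = (1 / (4 * Real.pi)) *
        (if 0 < r then
          ∫ t in (0 : ℝ)..(x ε r), (1 / 2 + ε * B / (4 * Real.sqrt (t ^ 2 + B ^ 2 / 4))) * t ^ 2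
         else
          ∫ t in (x ε r)..(0 : ℝ), (1 / 2 + ε * B / (4 * Real.sqrt (t ^ 2 + B ^ 2 / 4))) * t ^ 2))
    (hg : ∀ ε : ℝ, (ε = 1 ∨ ε = -1) → ∀ r : ℝ, r ≠ 0 →
      g ε r = if 0 < r then -(deriv (h ε) r) else deriv (h ε) r) :
    ∀ ε : ℝ, (ε = 1 ∨ ε = -1) →
      (∀ r : ℝ, r ≠ 0 → DifferentiableAt ℝ (h ε) r) ∧
      (∀ r : ℝ, r ≠ 0 → g ε (-r) = g ε r ∧ 0 < g ε r) := by
  intro ε hε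
  -- `x ε r` agrees with the abstract inverse `XR B ε γ r`.
  have hxX : ∀ r : ℝ, r ≠ 0 → x ε r = XR B ε γ r := by
    intro r hr
    have h1 : Fb B ε (x ε r) = Real.pi * (γ * r)⁻¹ := by
      rw [← div_eq_mul_inv]; exact hx ε hε r hr
    rw [XR, ← h1, XI_Fb hB hε]
  -- derivative data for `h ε` at every `r ≠ 0`
  have key : ∀ r : ℝ, r ≠ 0 → ∃ d : ℝ,
      HasDerivAt (h ε) d r ∧ (0 < r → d < 0) ∧ (r < 0 → 0 < d) := by
    intro r hr
    have hXd := hasDerivAt_XR hB hε hγ hr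
    have hΦd := hasDerivAt_PhiB (ε := ε) hB (XR B ε γ r)
    have hXDneg := XRderiv_neg hB hε hγ hr
    have hφpos : 0 < phiB B ε (XR B ε γ r) := phiB_pos hB hε (XR_ne_zero hB hε hγ hr)
    rcases hr.lt_or_gt with hneg | hpos
    · -- r < 0
      have hd := ((hΦd.comp r hXd).const_mul (1 / (4 * Real.pi))).neg
      refine ⟨_, hd.congr_of_eventuallyEq ?_, ?_, ?_⟩
      · filter_upwards [isOpen_Iio.mem_nhds hneg] with s hs
        have hs' : s ≠ 0 := ne_of_lt hs
        rw [hh ε hε s hs', if_neg (not_lt.2 (le_of_lt hs)), hxX s hs',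
          intervalIntegral.integral_symm]
        show 1 / (4 * Real.pi) * -(PhiB B ε (XR B ε γ s)) =
          -(1 / (4 * Real.pi) * ((PhiB B ε ∘ XR B ε γ) s))
        simp only [Function.comp_apply]
        ring
      · intro h0; exact absurd h0 (not_lt.2 hneg.le)
      · intro _
        have hπ4 : 0 < 1 / (4 * Real.pi) := by positivity
        have := mul_neg_of_pos_of_neg hφpos hXDneg
        nlinarith
    · -- 0 < r
      have hd := (hΦd.comp r hXd).const_mul (1 / (4 * Real.pi))
      refine ⟨_, hd.congr_of_eventuallyEq ?_, ?_, ?_⟩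
      · filter_upwards [isOpen_Ioi.mem_nhds hpos] with s hs
        have hs0 : (0:ℝ) < s := hs
        have hs' : s ≠ 0 := ne_of_gt hs0
        rw [hh ε hε s hs', if_pos hs0, hxX s hs']
        rfl
      · intro _
        have hπ4 : 0 < 1 / (4 * Real.pi) := by positivity
        have := mul_neg_of_pos_of_neg hφpos hXDneg
        nlinarith
      · intro h0; exact absurd hpos (not_lt.2 h0.le)
  -- evenness of `h`
  have hxodd : ∀ r : ℝ, r ≠ 0 → x ε (-r) = -(x ε r) := by
    intro r hr
    apply (strictMono_Fb hB hε).injective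
    show Fb B ε (x ε (-r)) = Fb B ε (-(x ε r))
    have h1 : Fb B ε (x ε (-r)) = Real.pi / (γ * (-r)) := hx ε hε (-r) (neg_ne_zero.2 hr)
    have h2 : Fb B ε (x ε r) = Real.pi / (γ * r) := hx ε hε r hr
    rw [h1, Fb_odd, h2, mul_neg, div_neg]
  have hevenpos : ∀ r : ℝ, 0 < r → h ε (-r) = h ε r := by
    intro r hr
    rw [hh ε hε (-r) (neg_ne_zero.2 (ne_of_gt hr)), hh ε hε r (ne_of_gt hr),
      if_neg (by linarith : ¬ (0:ℝ) < -r), if_pos hr, hxodd r (ne_of_gt hr)]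
    congr 1
    have hcn := intervalIntegral.integral_comp_neg (a := (0:ℝ)) (b := x ε r)
      (f := fun t => (1 / 2 + ε * B / (4 * Real.sqrt (t ^ 2 + B ^ 2 / 4))) * t ^ 2)
    rw [neg_zero] at hcn
    rw [← hcn]
    apply intervalIntegral.integral_congr
    intro t _
    exact phiB_even (B := B) (ε := ε) t
  have heven : ∀ r : ℝ, r ≠ 0 → h ε (-r) = h ε r := by
    intro r hr
    rcases hr.lt_or_gt with hneg | hpos
    · have := hevenpos (-r) (by linarith)
      rw [neg_neg] at this
      exact this.symm
    · exact hevenpos r hpos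
  have hderiv_neg : ∀ r : ℝ, r ≠ 0 → deriv (h ε) (-r) = -(deriv (h ε) r) := by
    intro r hr
    obtain ⟨d, hd, _, _⟩ := key r hr
    have h1 : HasDerivAt (fun s => h ε (-s)) (-d) (-r) := by
      have hd' : HasDerivAt (h ε) d (-(-r)) := by rwa [neg_neg]
      have := hd'.comp (-r) (hasDerivAt_neg (-r))
      have h5 : HasDerivAt (fun s => h ε (-s)) (d * -1) (-r) := this
      simpa [mul_comm] using h5
    have h2 : HasDerivAt (h ε) (-d) (-r) := by
      apply h1.congr_of_eventuallyEq
      filter_upwards [isOpen_compl_singleton.mem_nhds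
        (Set.mem_compl_singleton_iff.2 (neg_ne_zero.2 hr))] with s hs
      exact (heven s hs).symm
    rw [h2.deriv, hd.deriv]
  refine ⟨fun r hr => ((key r hr).choose_spec.1).differentiableAt, fun r hr => ?_⟩
  obtain ⟨d, hd, hd1, hd2⟩ := key r hr
  constructor
  · rw [hg ε hε (-r) (neg_ne_zero.2 hr), hg ε hε r hr, hderiv_neg r hr]
    rcases hr.lt_or_gt with hneg | hpos
    · rw [if_pos (by linarith : (0:ℝ) < -r), if_neg (not_lt.2 hneg.le)]; try ring
    · rw [if_neg (by linarith : ¬ (0:ℝ) < -r), if_pos hpos]; try ring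
  · rw [hg ε hε r hr]
    rcases hr.lt_or_gt with hneg | hpos
    · rw [if_neg (not_lt.2 hneg.le), hd.deriv]; exact hd2 hneg
    · rw [if_pos hpos, hd.deriv]; linarith [hd1 hpos]
end

section
/- For every γ > 0 and B > 0, the measure on ℝ \ {0} with density g_{B,+} + g_{B,−} with respect to Lebesgue measure is a Lévy measure, i.e. ∫_{ℝ \ {0}} min(1, r²)·(g_{B,+}(r) + g_{B,−}(r)) dr < ∞. -/
set_option linter.unusedSectionVars false
open MeasureTheory Filter Set
noncomputable section
namespace Stmt6Aux

variable (B : ℝ)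

def q (t : ℝ) : ℝ := Real.sqrt (t^2 + B^2/4)
def phi (ε t : ℝ) : ℝ := (2 * q B t + ε * B) * t
def phid (ε t : ℝ) : ℝ := 2 * q B t + ε * B + 2 * t^2 / q B t
def w (ε t : ℝ) : ℝ := (1/2 + ε * B/(4 * q B t)) * t^2

variable {B} (hB : 0 < B)
include hB

lemma q_pos (t : ℝ) : 0 < q B t := Real.sqrt_pos.2 (by positivity)

lemma q_sq (t : ℝ) : q B t ^ 2 = t^2 + B^2/4 := Real.sq_sqrt (by positivity)

lemma q_ge_half (t : ℝ) : B/2 ≤ q B t := by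
  rw [show B/2 = Real.sqrt ((B/2)^2) by rw [Real.sqrt_sq (by linarith)]]
  exact Real.sqrt_le_sqrt (by nlinarith)

lemma q_ge_abs (t : ℝ) : |t| ≤ q B t := by
  rw [show |t| = Real.sqrt (t^2) by rw [Real.sqrt_sq_eq_abs]]
  exact Real.sqrt_le_sqrt (by nlinarith)

lemma q_le (t : ℝ) : q B t ≤ |t| + B/2 := by
  rw [show |t| + B/2 = Real.sqrt ((|t| + B/2)^2) by rw [Real.sqrt_sq (by positivity)]]
  refine Real.sqrt_le_sqrt ?_
  have : 0 ≤ |t| * (B/2) := by positivity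
  nlinarith [sq_abs t]

variable {ε : ℝ} (hε : ε = 1 ∨ ε = -1)
include hε

lemma eB_le : ε * B ≤ B := by rcases hε with h | h <;> rw [h] <;> nlinarith
lemma neg_le_eB : -B ≤ ε * B := by rcases hε with h | h <;> rw [h] <;> nlinarith

lemma phid_nonneg (t : ℝ) : 0 ≤ phid B ε t := by
  have h1 := q_ge_half hB t
  have h2 := neg_le_eB hB hε
  have h3 : 0 ≤ 2 * t^2 / q B t := div_nonneg (by positivity) (q_pos hB t).le
  unfold phid; linarith

lemma phid_pos {t : ℝ} (ht : t ≠ 0) : 0 < phid B ε t := by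
  have h1 := q_ge_half hB t
  have h2 := neg_le_eB hB hε
  have h3 : 0 < 2 * t^2 / q B t :=
    div_pos (by positivity) (q_pos hB t)
  unfold phid; linarith



omit hε in
lemma hasDerivAt_q (t : ℝ) : HasDerivAt (q B) (t / q B t) t := by
  have h1 : HasDerivAt (fun t : ℝ => t^2 + B^2/4) (2*t) t := by
    simpa using (hasDerivAt_pow 2 t).add_const (B^2/4)
  have h2 := h1.sqrt (by positivity : t^2 + B^2/4 ≠ 0)
  convert h2 using 1
  · rfl
  rw [show Real.sqrt (t^2+B^2/4) = q B t from rfl]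
  field_simp [(q_pos hB t).ne']

lemma hasDerivAt_phi (t : ℝ) : HasDerivAt (phi B ε) (phid B ε t) t := by
  have h1 : HasDerivAt (fun t : ℝ => 2 * q B t + ε * B) (2 * (t / q B t)) t :=
    ((hasDerivAt_q hB t).const_mul 2).add_const (ε*B)
  have h2 := h1.mul (hasDerivAt_id t)
  refine h2.congr_deriv ?_
  unfold phid id
  field_simp [(q_pos hB t).ne']
  ring

omit hε in
lemma continuous_q : Continuous (q B) := by
  exact Real.continuous_sqrt.comp (by continuity)

lemma continuous_phi : Continuous (phi B ε) :=
  ((continuous_const.mul (continuous_q hB)).add continuous_const).mul continuous_id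

lemma strictMono_phi : StrictMono (phi B ε) := by
  have hderiv : deriv (phi B ε) = phid B ε := funext fun t => (hasDerivAt_phi hB hε t).deriv
  have hIci : StrictMonoOn (phi B ε) (Ici 0) := by
    refine strictMonoOn_of_deriv_pos (convex_Ici 0) (continuous_phi hB hε).continuousOn ?_
    intro t ht
    rw [interior_Ici] at ht
    rw [hderiv]
    exact phid_pos hB hε (ne_of_gt ht)
  have hIic : StrictMonoOn (phi B ε) (Iic 0) := by
    refine strictMonoOn_of_deriv_pos (convex_Iic 0) (continuous_phi hB hε).continuousOn ?_
    intro t ht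
    rw [interior_Iic] at ht
    rw [hderiv]
    exact phid_pos hB hε (ne_of_lt ht)
  intro a b hab
  rcases le_total 0 a with ha | ha
  · exact hIci ha (le_trans ha hab.le) hab
  · rcases le_total b 0 with hb | hb
    · exact hIic (hab.le.trans hb) hb hab
    · rcases ha.lt_or_eq with h | h
      · have h1 : phi B ε a < phi B ε 0 := hIic ha self_mem_Iic h
        have h2 : phi B ε 0 ≤ phi B ε b := by
          rcases hb.lt_or_eq with h' | h'
          · exact (hIci self_mem_Ici hb h').le
          · rw [h']
        linarith
      · subst h
        exact hIci self_mem_Ici hb hab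

omit hε in
lemma phi_neg (ε t : ℝ) : phi B ε (-t) = - phi B ε t := by
  unfold phi q
  rw [neg_sq]
  ring

lemma phi_zero : phi B ε 0 = 0 := by unfold phi; ring

lemma tendsto_phi_atTop : Tendsto (phi B ε) atTop atTop := by
  refine tendsto_atTop_mono' atTop ?_ tendsto_id
  filter_upwards [eventually_ge_atTop (B+1), eventually_ge_atTop 0] with t h1 h0
  have hq := q_ge_abs hB t
  rw [abs_of_nonneg h0] at hq
  have he := neg_le_eB hB hε
  simp only [id_eq, phi]
  nlinarith [mul_nonneg (sub_nonneg.2 hq) h0, mul_nonneg (by linarith : (0:ℝ) ≤ ε*B + B) h0,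
    mul_nonneg h0 (by linarith : (0:ℝ) ≤ 2*t - B - 1)]

lemma tendsto_phi_atBot : Tendsto (phi B ε) atBot atBot := by
  have h1 : Tendsto (fun t => phi B ε (-t)) atBot atTop :=
    (tendsto_phi_atTop hB hε).comp tendsto_neg_atBot_atTop
  have h2 : Tendsto (fun t => - phi B ε (-t)) atBot atBot :=
    tendsto_neg_atTop_atBot.comp h1
  refine h2.congr fun t => ?_
  rw [phi_neg hB]; ring

lemma surjective_phi : Function.Surjective (phi B ε) :=
  (continuous_phi hB hε).surjective (tendsto_phi_atTop hB hε) (tendsto_phi_atBot hB hε)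

def psi : ℝ ≃o ℝ :=
  StrictMono.orderIsoOfSurjective _ (strictMono_phi hB hε) (surjective_phi hB hε)

lemma phi_psi_symm (y : ℝ) : phi B ε ((psi hB hε).symm y) = y :=
  StrictMono.orderIsoOfSurjective_self_symm_apply _ _ _ y

lemma continuous_psi_symm : Continuous ((psi hB hε).symm : ℝ → ℝ) :=
  OrderIso.continuous _

lemma hasDerivAt_psi_symm {y : ℝ} (hy : (psi hB hε).symm y ≠ 0) :
    HasDerivAt ((psi hB hε).symm : ℝ → ℝ) (phid B ε ((psi hB hε).symm y))⁻¹ y :=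
  HasDerivAt.of_local_left_inverse ((continuous_psi_symm hB hε).continuousAt)
    (hasDerivAt_phi hB hε _) (ne_of_gt (phid_pos hB hε hy))
    (Filter.Eventually.of_forall (phi_psi_symm hB hε))

omit hB hε in
lemma w_eq (t : ℝ) : (1 / 2 + ε * B / (4 * Real.sqrt (t ^ 2 + B ^ 2 / 4))) * t ^ 2 = w B ε t :=
  rfl

lemma continuous_w : Continuous (w B ε) := by
  refine ((continuous_const.add (continuous_const.div
    (continuous_const.mul (continuous_q hB)) fun t => ?_)).mul (by continuity))
  have := q_pos hB t
  exact (mul_pos four_pos this).ne'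

lemma coeff_abs (t : ℝ) : |ε * B / (4 * q B t)| ≤ 1/2 := by
  have h1 := q_pos hB t
  have h2 := q_ge_half hB t
  have habs : |ε * B| = B := by
    rcases hε with h | h <;> rw [h] <;> simp [abs_of_pos hB]
  rw [abs_div, habs, abs_of_pos (by positivity : (0:ℝ) < 4 * q B t),
    div_le_iff₀ (by positivity)]
  linarith

lemma w_nonneg (t : ℝ) : 0 ≤ w B ε t := by
  have := abs_le.1 (coeff_abs hB hε t)
  have h2 : (0:ℝ) ≤ t^2 := sq_nonneg t
  unfold w
  nlinarith

lemma w_le (t : ℝ) : w B ε t ≤ t^2 := by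
  have := abs_le.1 (coeff_abs hB hε t)
  have h2 : (0:ℝ) ≤ t^2 := sq_nonneg t
  unfold w
  nlinarith

lemma hasDerivAt_W (y : ℝ) :
    HasDerivAt (fun y => ∫ t in (0:ℝ)..y, w B ε t) (w B ε y) y :=
  intervalIntegral.integral_hasDerivAt_right
    ((continuous_w hB hε).intervalIntegrable _ _)
    ((continuous_w hB hε).stronglyMeasurableAtFilter _ _)
    (continuous_w hB hε).continuousAt

lemma phi_bound {s : ℝ} (hs : 0 < s) :
    s ≤ phi B ε (Real.sqrt s + (s*B)^((1:ℝ)/3)) := by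
  set A := Real.sqrt s + (s*B)^((1:ℝ)/3) with hAdef
  have hA0 : 0 < A := by
    have := Real.sqrt_pos.2 hs
    have := Real.rpow_pos_of_pos (by positivity : 0 < s*B) ((1:ℝ)/3)
    positivity
  have hAs : Real.sqrt s ≤ A := by
    have := (Real.rpow_pos_of_pos (by positivity : 0 < s*B) ((1:ℝ)/3)).le
    rw [hAdef]; linarith
  have h2 : s ≤ A^2 := by
    nlinarith [Real.sq_sqrt hs.le, mul_le_mul hAs hAs (Real.sqrt_nonneg s) hA0.le]
  have hcube : ((s*B)^((1:ℝ)/3))^3 = s*B := by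
    rw [← Real.rpow_natCast ((s*B)^((1:ℝ)/3)) 3, ← Real.rpow_mul (by positivity)]
    norm_num
  have h3 : s*B ≤ A^3 := by
    rw [← hcube]
    refine pow_le_pow_left₀ (by positivity) ?_ 3
    have := Real.sqrt_nonneg s
    linarith
  clear_value A
  have hqa : A ≤ q B A := by
    have := q_ge_abs hB A
    rwa [abs_of_pos hA0] at this
  have hql : q B A ≤ A + B/2 := by
    have := q_le hB A
    rwa [abs_of_pos hA0] at this
  rcases hε with h | h <;> rw [h] <;> unfold phi
  · -- ε = 1
    nlinarith [mul_le_mul_of_nonneg_right hqa hA0.le]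
  · -- ε = -1
    have hq0 := q_pos hB A
    have key : ((2*q B A + (-1)*B)*A)*(2*q B A + B) = 4*A^3 := by
      have hq2 := q_sq hB A
      linear_combination (4*A) * hq2
    have hpos : 0 < 2*q B A + B := by linarith
    have h5 : s * (2*q B A + B) ≤ 4*A^3 := by
      nlinarith [mul_le_mul_of_nonneg_left hql hs.le,
        mul_le_mul_of_nonneg_right h2 hA0.le]
    rw [← key] at h5
    exact le_of_mul_le_mul_right h5 hpos

omit hB hε in
lemma pi_div_ne (γ r : ℝ) (hγ : 0 < γ) (hr : r ≠ 0) : Real.pi / (γ * r) ≠ 0 :=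
  div_ne_zero Real.pi_ne_zero (mul_ne_zero hγ.ne' hr)

/-- If `phi (x) = π/(γ r)` then `x ≠ 0` and `|x| ≤ √(π/(γ|r|)) + (πB/(γ|r|))^(1/3)`. -/
lemma x_props {γ X r : ℝ} (hγ : 0 < γ) (hr : r ≠ 0)
    (hX : phi B ε X = Real.pi / (γ * r)) :
    X ≠ 0 ∧ |X| ≤ Real.sqrt (Real.pi/(γ*|r|)) + (Real.pi/(γ*|r|)*B)^((1:ℝ)/3) := by
  have hsm := strictMono_phi hB hε
  have hX0 : X ≠ 0 := by
    intro h0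
    apply pi_div_ne γ r hγ hr
    rw [← hX, h0, phi_zero hB hε]
  refine ⟨hX0, ?_⟩
  have hs : 0 < Real.pi/(γ*|r|) := by
    have : 0 < |r| := abs_pos.2 hr
    positivity
  have hb := phi_bound hB hε hs
  rcases hr.lt_or_gt with hneg | hpos
  · -- r < 0, so phi X < 0, X < 0
    have hXneg : X < 0 := by
      by_contra hc
      push_neg at hc
      have h1 : phi B ε 0 ≤ phi B ε X := hsm.le_iff_le.2 hc
      rw [phi_zero hB hε, hX] at h1
      have : Real.pi / (γ * r) < 0 :=
        div_neg_of_pos_of_neg Real.pi_pos (by nlinarith)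
      linarith
    rw [abs_of_neg hXneg]
    have habs : Real.pi / (γ * |r|) = - (Real.pi / (γ * r)) := by
      rw [abs_of_neg hneg]
      field_simp
    have hphineg : phi B ε (-X) = Real.pi / (γ * |r|) := by
      rw [phi_neg hB, hX, habs]
    refine hsm.le_iff_le.1 ?_
    rw [hphineg]
    exact hb
  · -- r > 0
    have habs : Real.pi / (γ * |r|) = Real.pi / (γ * r) := by rw [abs_of_pos hpos]
    have hXpos : 0 < X := by
      by_contra hc
      push_neg at hc
      have h1 : phi B ε X ≤ phi B ε 0 := hsm.le_iff_le.2 hc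
      rw [phi_zero hB hε, hX] at h1
      have : 0 < Real.pi / (γ * r) := by positivity
      linarith
    rw [abs_of_pos hXpos]
    refine hsm.le_iff_le.1 ?_
    rw [hX, ← habs]
    exact hb

/-- The value of `±deriv h` at `r ≠ 0`. -/
lemma g_eq (γ : ℝ) (hγ : 0 < γ) (x h : ℝ → ℝ)
    (hx' : ∀ r, r ≠ 0 → phi B ε (x r) = Real.pi/(γ*r))
    (hh' : ∀ r, r ≠ 0 → h r = (1/(4*Real.pi)) *
      (if 0 < r then ∫ t in (0:ℝ)..x r, w B ε t else ∫ t in x r..(0:ℝ), w B ε t))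
    {r : ℝ} (hr : r ≠ 0) :
    (if 0 < r then -(deriv h r) else deriv h r)
      = (1/(4*Real.pi)) * (w B ε (x r) *
          ((phid B ε (x r))⁻¹ * (Real.pi/γ * (r^2)⁻¹))) := by
  have hx0 : x r ≠ 0 := (x_props hB hε hγ hr (hx' r hr)).1
  have hxpsi : ∀ r', r' ≠ 0 → x r' = (psi hB hε).symm (Real.pi/(γ*r')) := by
    intro r' hr'
    refine (strictMono_phi hB hε).injective ?_
    rw [hx' r' hr', phi_psi_symm hB hε]
  -- derivative of u(r) = π/(γ r)
  have hufun : (fun r' : ℝ => Real.pi/(γ*r')) = fun r' => (Real.pi/γ) * r'⁻¹ := by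
    funext r'
    rw [← div_div, div_eq_mul_inv]
  have hu : HasDerivAt (fun r' : ℝ => Real.pi/(γ*r')) (Real.pi/γ * -((r^2)⁻¹)) r := by
    rw [hufun]
    exact (hasDerivAt_inv hr).const_mul (Real.pi/γ)
  have hsymm : (psi hB hε).symm (Real.pi/(γ*r)) = x r := (hxpsi r hr).symm
  have hpsid : HasDerivAt ((psi hB hε).symm : ℝ → ℝ) (phid B ε (x r))⁻¹ (Real.pi/(γ*r)) := by
    have := hasDerivAt_psi_symm hB hε (y := Real.pi/(γ*r)) (by rw [hsymm]; exact hx0)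
    rwa [hsymm] at this
  have hXd : HasDerivAt x ((phid B ε (x r))⁻¹ * (Real.pi/γ * -((r^2)⁻¹))) r := by
    refine HasDerivAt.congr_of_eventuallyEq (hpsid.comp r hu) ?_
    filter_upwards [eventually_ne_nhds hr] with r' hr'
    exact hxpsi r' hr'
  have hWd : HasDerivAt (fun r' => ∫ t in (0:ℝ)..x r', w B ε t)
      (w B ε (x r) * ((phid B ε (x r))⁻¹ * (Real.pi/γ * -((r^2)⁻¹)))) r :=
    (hasDerivAt_W hB hε (x r)).comp r hXd
  rcases hr.lt_or_gt with hneg | hpos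
  · -- r < 0
    rw [if_neg (not_lt.2 hneg.le)]
    have heq : h =ᶠ[nhds r] fun r' => (1/(4*Real.pi)) * -(∫ t in (0:ℝ)..x r', w B ε t) := by
      filter_upwards [eventually_lt_nhds hneg] with r' hr'
      rw [hh' r' (ne_of_lt hr'), if_neg (not_lt.2 hr'.le),
        intervalIntegral.integral_symm]
    have hd : HasDerivAt h ((1/(4*Real.pi)) *
        -(w B ε (x r) * ((phid B ε (x r))⁻¹ * (Real.pi/γ * -((r^2)⁻¹))))) r :=
      HasDerivAt.congr_of_eventuallyEq ((hWd.neg).const_mul (1/(4*Real.pi))) heq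
    rw [hd.deriv]
    ring
  · -- r > 0
    rw [if_pos hpos]
    have heq : h =ᶠ[nhds r] fun r' => (1/(4*Real.pi)) * ∫ t in (0:ℝ)..x r', w B ε t := by
      filter_upwards [eventually_gt_nhds hpos] with r' hr'
      rw [hh' r' (ne_of_gt hr'), if_pos hr']
    have hd : HasDerivAt h ((1/(4*Real.pi)) *
        (w B ε (x r) * ((phid B ε (x r))⁻¹ * (Real.pi/γ * -((r^2)⁻¹))))) r :=
      HasDerivAt.congr_of_eventuallyEq (hWd.const_mul (1/(4*Real.pi))) heq
    rw [hd.deriv]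
    ring

omit hB hε in
lemma integrable_m_rpow {a : ℝ} (h0 : 0 ≤ a) (h1 : a < 1) :
    Integrable (fun r : ℝ => min 1 (r^2) * (r^2)⁻¹ * |r| ^ (-a)) := by
  set F : ℝ → ℝ := fun r => min 1 (r^2) * (r^2)⁻¹ * |r| ^ (-a) with hF
  have hIoi : IntegrableOn F (Ioi 0) := by
    have h01 : IntegrableOn F (Ioc 0 1) := by
      refine IntegrableOn.congr_fun
        ((intervalIntegral.intervalIntegrable_rpow' (show (-1:ℝ) < -a by linarith)).1)
        ?_ measurableSet_Ioc
      rintro r ⟨hr0, hr1⟩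
      have hmin : min 1 (r^2) = r^2 := min_eq_right (by nlinarith)
      rw [hF]
      simp only []
      rw [hmin, mul_inv_cancel₀ (by positivity), one_mul, abs_of_pos hr0]
    have h1i : IntegrableOn F (Ioi 1) := by
      refine IntegrableOn.congr_fun
        (integrableOn_Ioi_rpow_of_lt (show -(2+a) < -1 by linarith) one_pos)
        ?_ measurableSet_Ioi
      intro r hr
      have hr1 : (1:ℝ) < r := hr
      have hr0 : (0:ℝ) < r := lt_trans one_pos hr1
      have hmin : min 1 (r^2) = 1 := min_eq_left (by nlinarith)
      have hinv : (r^2)⁻¹ = r ^ ((-2 : ℝ)) := by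
        rw [Real.rpow_neg hr0.le, Real.rpow_two]
      rw [hF]
      simp only []
      rw [hmin, one_mul, hinv, abs_of_pos hr0, ← Real.rpow_add hr0]
      ring_nf
    have hu : Ioc (0:ℝ) 1 ∪ Ioi 1 = Ioi 0 := Ioc_union_Ioi_eq_Ioi zero_le_one
    rw [← hu]
    exact h01.union h1i
  have hFeven : F ∘ (fun r : ℝ => -r) = F := by
    funext r
    simp only [hF, Function.comp_apply, neg_sq, abs_neg]
  have hIio : IntegrableOn F (Iio 0) := by
    have hpre : (fun r : ℝ => -r) ⁻¹' (Ioi 0) = Iio 0 := by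
      ext r; simp
    rw [← hpre, ← hFeven]
    exact ((Measure.measurePreserving_neg (volume : Measure ℝ)).integrableOn_comp_preimage
      (Homeomorph.neg ℝ).measurableEmbedding).2 hIoi
  rw [← integrableOn_univ, ← Iio_union_Ici (a := (0:ℝ)), integrableOn_union,
    integrableOn_Ici_iff_integrableOn_Ioi]
  exact ⟨hIio, hIoi⟩

omit hε in
lemma integrable_M (γ : ℝ) (hγ : 0 < γ) :
    Integrable (fun r : ℝ => (1/(4*γ)) * (min 1 (r^2) * (r^2)⁻¹ *
      (Real.sqrt (Real.pi/(γ*|r|)) + (Real.pi/(γ*|r|)*B)^((1:ℝ)/3) + B/2))) := by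
  have hπ := Real.pi_pos
  have e1 : ∀ r : ℝ, Real.sqrt (Real.pi/(γ*|r|))
      = Real.sqrt (Real.pi/γ) * |r| ^ (-(1/2) : ℝ) := by
    intro r
    rcases eq_or_ne r 0 with h | h
    · subst h
      simp [Real.zero_rpow (show (-(1/2):ℝ) ≠ 0 by norm_num)]
    · have habs : (0:ℝ) < |r| := abs_pos.2 h
      rw [show Real.pi/(γ*|r|) = (Real.pi/γ) * |r|⁻¹ by field_simp,
        Real.sqrt_mul (by positivity), Real.sqrt_eq_rpow, Real.sqrt_eq_rpow,
        Real.inv_rpow (abs_nonneg r), ← Real.rpow_neg (abs_nonneg r)]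
  have e2 : ∀ r : ℝ, (Real.pi/(γ*|r|)*B)^((1:ℝ)/3)
      = (Real.pi/γ*B)^((1:ℝ)/3) * |r| ^ (-(1/3) : ℝ) := by
    intro r
    rcases eq_or_ne r 0 with h | h
    · subst h
      simp [Real.zero_rpow (show ((1:ℝ)/3) ≠ 0 by norm_num),
        Real.zero_rpow (show (-(1/3):ℝ) ≠ 0 by norm_num)]
    · have habs : (0:ℝ) < |r| := abs_pos.2 h
      rw [show Real.pi/(γ*|r|)*B = (Real.pi/γ*B) * |r|⁻¹ by field_simp,
        Real.mul_rpow (by positivity) (by positivity),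
        Real.inv_rpow (abs_nonneg r), ← Real.rpow_neg (abs_nonneg r)]
  have key : (fun r : ℝ => (1/(4*γ)) * (min 1 (r^2) * (r^2)⁻¹ *
        (Real.sqrt (Real.pi/(γ*|r|)) + (Real.pi/(γ*|r|)*B)^((1:ℝ)/3) + B/2)))
      = fun r : ℝ => (1/(4*γ)) *
        ((Real.sqrt (Real.pi/γ)) * (min 1 (r^2) * (r^2)⁻¹ * |r|^(-(1/2) : ℝ))
         + ((Real.pi/γ*B)^((1:ℝ)/3)) * (min 1 (r^2) * (r^2)⁻¹ * |r|^(-(1/3) : ℝ))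
         + (B/2) * (min 1 (r^2) * (r^2)⁻¹ * |r|^(-(0:ℝ)))) := by
    funext r
    rw [e1 r, e2 r, neg_zero, Real.rpow_zero]
    ring
  rw [key]
  exact ((((integrable_m_rpow (by norm_num) (by norm_num)).const_mul _).add
    ((integrable_m_rpow (by norm_num) (by norm_num)).const_mul _)).add
    ((integrable_m_rpow le_rfl one_pos).const_mul _)).const_mul _

end Stmt6Aux

open Stmt6Aux

/-- For every `γ > 0` and `B > 0`, the measure on `ℝ \ {0}` with density
`g_{B,+} + g_{B,-}` with respect to Lebesgue measure is a Lévy measure, i.e.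
`∫_{ℝ \ {0}} min(1, r²)·(g_{B,+}(r) + g_{B,-}(r)) dr < ∞`. -/
theorem stmt_6 (γ B : ℝ) (hγ : 0 < γ) (hB : 0 < B)
    (x h g : ℝ → ℝ → ℝ)
    (hx : ∀ ε : ℝ, (ε = 1 ∨ ε = -1) → ∀ r : ℝ, r ≠ 0 →
      (2 * Real.sqrt (x ε r ^ 2 + B ^ 2 / 4) + ε * B) * x ε r = Real.pi / (γ * r))
    (hh : ∀ ε : ℝ, (ε = 1 ∨ ε = -1) → ∀ r : ℝ, r ≠ 0 →
      h ε r = (1 / (4 * Real.pi)) *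
        (if 0 < r then
          ∫ t in (0 : ℝ)..(x ε r), (1 / 2 + ε * B / (4 * Real.sqrt (t ^ 2 + B ^ 2 / 4))) * t ^ 2
         else
          ∫ t in (x ε r)..(0 : ℝ), (1 / 2 + ε * B / (4 * Real.sqrt (t ^ 2 + B ^ 2 / 4))) * t ^ 2))
    (hg : ∀ ε : ℝ, (ε = 1 ∨ ε = -1) → ∀ r : ℝ, r ≠ 0 →
      g ε r = if 0 < r then -(deriv (h ε) r) else deriv (h ε) r) :
    ∫⁻ r in ({0}ᶜ : Set ℝ),
      ENNReal.ofReal (min 1 (r ^ 2) * (g 1 r + g (-1) r)) < ⊤ := by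
  have hπ := Real.pi_pos
  set M : ℝ → ℝ := fun r => (1/(4*γ)) * (min 1 (r^2) * (r^2)⁻¹ *
      (Real.sqrt (Real.pi/(γ*|r|)) + (Real.pi/(γ*|r|)*B)^((1:ℝ)/3) + B/2)) with hM
  have hmain : ∀ ε : ℝ, (ε = 1 ∨ ε = -1) → ∀ r : ℝ, r ≠ 0 →
      g ε r ≤ (1/(8*γ)) * (r^2)⁻¹ *
        (Real.sqrt (Real.pi/(γ*|r|)) + (Real.pi/(γ*|r|)*B)^((1:ℝ)/3) + B/2) := by
    intro ε hεm r hr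
    have hxr : phi B ε (x ε r) = Real.pi/(γ*r) := hx ε hεm r hr
    obtain ⟨hX0, hXa⟩ := x_props hB hεm hγ hr hxr
    have hgval : g ε r = (1/(4*Real.pi)) * (w B ε (x ε r) *
        ((phid B ε (x ε r))⁻¹ * (Real.pi/γ * (r^2)⁻¹))) := by
      rw [hg ε hεm r hr]
      exact g_eq hB hεm γ hγ (x ε) (h ε) (fun r hr => hx ε hεm r hr)
        (fun r hr => hh ε hεm r hr) hr
    have hq0 := q_pos hB (x ε r)
    have hpd := phid_pos hB hεm hX0
    have hw0 := w_nonneg hB hεm (x ε r)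
    have hwle := w_le hB hεm (x ε r)
    have hX2 : (0:ℝ) < (x ε r)^2 := by positivity
    have hpdge : 2*(x ε r)^2 / q B (x ε r) ≤ phid B ε (x ε r) := by
      have h1 := q_ge_half hB (x ε r)
      have h2 := neg_le_eB hB hεm
      unfold phid
      linarith
    have hinv : (phid B ε (x ε r))⁻¹ ≤ q B (x ε r) / (2*(x ε r)^2) := by
      have h1 : 0 < 2*(x ε r)^2 / q B (x ε r) := by positivity
      have h2 := inv_anti₀ h1 hpdge
      rwa [inv_div] at h2
    have hprod : w B ε (x ε r) * (phid B ε (x ε r))⁻¹ ≤ q B (x ε r) / 2 := by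
      have h3 : w B ε (x ε r) * (phid B ε (x ε r))⁻¹
          ≤ (x ε r)^2 * (q B (x ε r) / (2*(x ε r)^2)) :=
        mul_le_mul hwle hinv (by positivity) (sq_nonneg _)
      have h4 : (x ε r)^2 * (q B (x ε r) / (2*(x ε r)^2)) = q B (x ε r) / 2 := by
        field_simp
      linarith
    have hqle : q B (x ε r) ≤ |x ε r| + B/2 := q_le hB (x ε r)
    rw [hgval]
    have hr2 : (0:ℝ) < (r^2)⁻¹ := by positivity
    have step1 : (1/(4*Real.pi)) * (w B ε (x ε r) *
        ((phid B ε (x ε r))⁻¹ * (Real.pi/γ * (r^2)⁻¹)))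
        = (1/(4*γ)) * (r^2)⁻¹ * (w B ε (x ε r) * (phid B ε (x ε r))⁻¹) := by
      field_simp
    rw [step1]
    have hq2 : q B (x ε r) ≤ Real.sqrt (Real.pi/(γ*|r|))
        + (Real.pi/(γ*|r|)*B)^((1:ℝ)/3) + B/2 := by linarith
    have h5 : (1/(4*γ)) * (r^2)⁻¹ * (w B ε (x ε r) * (phid B ε (x ε r))⁻¹)
        ≤ (1/(4*γ)) * (r^2)⁻¹ * (q B (x ε r) / 2) :=
      mul_le_mul_of_nonneg_left hprod (by positivity)
    have h6 := mul_le_mul_of_nonneg_left hq2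
      (show (0:ℝ) ≤ (1/(8*γ))*(r^2)⁻¹ by positivity)
    calc (1/(4*γ)) * (r^2)⁻¹ * (w B ε (x ε r) * (phid B ε (x ε r))⁻¹)
        ≤ (1/(4*γ)) * (r^2)⁻¹ * (q B (x ε r) / 2) := h5
      _ = (1/(8*γ)) * (r^2)⁻¹ * q B (x ε r) := by ring
      _ ≤ _ := by linarith [h6]
  have hbound : ∀ r : ℝ, r ≠ 0 →
      min 1 (r^2) * (g 1 r + g (-1) r) ≤ M r := by
    intro r hr
    have h1 := hmain 1 (Or.inl rfl) r hr
    have h2 := hmain (-1) (Or.inr rfl) r hr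
    have hmin0 : (0:ℝ) ≤ min 1 (r^2) := le_min zero_le_one (sq_nonneg r)
    have hsum : g 1 r + g (-1) r ≤ (1/(4*γ)) * (r^2)⁻¹ *
        (Real.sqrt (Real.pi/(γ*|r|)) + (Real.pi/(γ*|r|)*B)^((1:ℝ)/3) + B/2) := by
      have h12 : g 1 r + g (-1) r ≤ 2 * ((1/(8*γ)) * (r^2)⁻¹ *
          (Real.sqrt (Real.pi/(γ*|r|)) + (Real.pi/(γ*|r|)*B)^((1:ℝ)/3) + B/2)) := by
        linarith
      calc g 1 r + g (-1) r ≤ 2 * ((1/(8*γ)) * (r^2)⁻¹ *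
          (Real.sqrt (Real.pi/(γ*|r|)) + (Real.pi/(γ*|r|)*B)^((1:ℝ)/3) + B/2)) := h12
        _ = (1/(4*γ)) * (r^2)⁻¹ *
          (Real.sqrt (Real.pi/(γ*|r|)) + (Real.pi/(γ*|r|)*B)^((1:ℝ)/3) + B/2) := by ring
    calc min 1 (r^2) * (g 1 r + g (-1) r)
        ≤ min 1 (r^2) * ((1/(4*γ)) * (r^2)⁻¹ *
          (Real.sqrt (Real.pi/(γ*|r|)) + (Real.pi/(γ*|r|)*B)^((1:ℝ)/3) + B/2)) :=
        mul_le_mul_of_nonneg_left hsum hmin0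
      _ = M r := by rw [hM]; ring
  have hae : ∀ᵐ (r : ℝ) ∂(volume.restrict ({0}ᶜ : Set ℝ)),
      ENNReal.ofReal (min 1 (r ^ 2) * (g 1 r + g (-1) r)) ≤ ENNReal.ofReal (M r) := by
    refine ae_restrict_of_ae ?_
    have h0 : ∀ᵐ (r : ℝ) ∂volume, r ∈ ({0}ᶜ : Set ℝ) :=
      compl_mem_ae_iff.2 (measure_singleton 0)
    exact h0.mono fun r hr => ENNReal.ofReal_le_ofReal (hbound r hr)
  calc ∫⁻ r in ({0}ᶜ : Set ℝ), ENNReal.ofReal (min 1 (r ^ 2) * (g 1 r + g (-1) r))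
      ≤ ∫⁻ r in ({0}ᶜ : Set ℝ), ENNReal.ofReal (M r) := lintegral_mono_ae hae
    _ ≤ ∫⁻ r, ENNReal.ofReal (M r) := setLIntegral_le_lintegral _ _
    _ < ⊤ := (integrable_M hB γ hγ).lintegral_lt_top
end
end

section
/- Fix γ > 0 and define g_∞(r) = (π²/(2¹¹·27·γ⁵))^{1/3}·|r|^{−8/3} for r ≠ 0. Then for every r ≠ 0, lim_{B→+∞} B^{1/3}·g_{B,+}(r) = 0 and lim_{B→+∞} B^{1/3}·g_{B,−}(r) = g_∞(r). Moreover g_∞ is the density of a Lévy measure on ℝ \ {0}, i.e. ∫_{ℝ \ {0}} min(1, r²)·g_∞(r) dr < ∞. -/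
open Filter Topology MeasureTheory

namespace Stmt8Aux
set_option maxHeartbeats 1000000
open Set

noncomputable def S (B t : ℝ) : ℝ := Real.sqrt (t ^ 2 + B ^ 2 / 4)

noncomputable def F (B ε t : ℝ) : ℝ := (2 * S B t + ε * B) * t

noncomputable def Fd (B ε t : ℝ) : ℝ := 2 * S B t + ε * B + 2 * t ^ 2 / S B t





lemma S_sq {B : ℝ} (t : ℝ) : S B t ^ 2 = t ^ 2 + B ^ 2 / 4 :=
  Real.sq_sqrt (by positivity)

lemma S_pos {B : ℝ} (hB : 0 < B) (t : ℝ) : 0 < S B t :=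
  Real.sqrt_pos.2 (by positivity)

lemma half_le_S {B : ℝ} (hB : 0 < B) (t : ℝ) : B / 2 ≤ S B t := by
  have h := S_sq (B := B) t
  nlinarith [S_pos hB t, sq_nonneg t, sq_nonneg (S B t - B / 2)]

lemma hasDerivAt_S {B : ℝ} (hB : 0 < B) (t : ℝ) :
    HasDerivAt (S B) (t / S B t) t := by
  have h1 : HasDerivAt (fun u : ℝ => u ^ 2 + B ^ 2 / 4) (2 * t) t := by
    simpa using (hasDerivAt_pow 2 t).add_const (B ^ 2 / 4)
  have h2 := h1.sqrt (by positivity)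
  convert h2 using 1
  have := S_pos hB t
  · rfl
  rw [show Real.sqrt (t ^ 2 + B ^ 2 / 4) = S B t from rfl]
  field_simp

lemma hasDerivAt_F {B : ℝ} (hB : 0 < B) (ε t : ℝ) :
    HasDerivAt (F B ε) (Fd B ε t) t := by
  have h1 : HasDerivAt (fun u : ℝ => 2 * S B u + ε * B) (2 * (t / S B t)) t :=
    ((hasDerivAt_S hB t).const_mul 2).add_const (ε * B)
  have h2 := h1.mul (hasDerivAt_id t)
  convert h2 using 1
  have hs := S_pos hB t
  · rfl
  · rfl
  · rfl
  rw [Fd, id]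
  field_simp
  ring

lemma Fd_pos {B : ℝ} (hB : 0 < B) {ε : ℝ} (hε : ε = 1 ∨ ε = -1) {t : ℝ}
    (ht : ε = 1 ∨ t ≠ 0) : 0 < Fd B ε t := by
  have hs := S_pos hB t
  have hs2 := S_sq (B := B) t
  have hsB := half_le_S hB t
  have key : 0 < (2 * S B t + ε * B + 2 * t ^ 2 / S B t) * S B t := by
    have hexp : (2 * S B t + ε * B + 2 * t ^ 2 / S B t) * S B t
        = 2 * S B t ^ 2 + ε * B * S B t + 2 * t ^ 2 := by
      field_simp
    rw [hexp]
    rcases hε with rfl | rfl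
    · nlinarith [sq_nonneg t]
    · have ht' : t ≠ 0 := by
        rcases ht with h | h
        · norm_num at h
        · exact h
      have ht2 : 0 < t ^ 2 := by positivity
      nlinarith [mul_pos hB hs, sq_nonneg t, sq_nonneg (2 * S B t - B)]
  rw [Fd]
  by_contra hcon
  push_neg at hcon
  nlinarith [key, hs]

lemma F_strictMono {B : ℝ} (hB : 0 < B) {ε : ℝ} (hε : ε = 1 ∨ ε = -1) :
    StrictMono (F B ε) := by
  have hd : ∀ t, HasDerivAt (F B ε) (Fd B ε t) t := hasDerivAt_F hB ε
  have hderiv : deriv (F B ε) = Fd B ε := funext fun t => (hd t).deriv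
  have hcont : Continuous (F B ε) :=
    continuous_iff_continuousAt.2 fun t => (hd t).continuousAt
  rcases hε with rfl | rfl
  · apply strictMono_of_deriv_pos
    intro t
    rw [hderiv]
    exact Fd_pos hB (Or.inl rfl) (Or.inl rfl)
  · have hIci : StrictMonoOn (F B (-1)) (Set.Ici 0) := by
      apply strictMonoOn_of_deriv_pos (convex_Ici 0) hcont.continuousOn
      intro t ht
      rw [interior_Ici] at ht
      rw [hderiv]
      exact Fd_pos hB (Or.inr rfl) (Or.inr (ne_of_gt ht))
    have hIic : StrictMonoOn (F B (-1)) (Set.Iic 0) := by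
      apply strictMonoOn_of_deriv_pos (convex_Iic 0) hcont.continuousOn
      intro t ht
      rw [interior_Iic] at ht
      rw [hderiv]
      exact Fd_pos hB (Or.inr rfl) (Or.inr (ne_of_lt ht))
    intro a b hab
    rcases le_or_gt b 0 with hb | hb
    · exact hIic (le_of_lt (lt_of_lt_of_le hab hb)) hb hab
    · rcases le_or_gt 0 a with ha | ha
      · exact hIci ha (le_of_lt (lt_of_le_of_lt ha hab)) hab
      · calc F B (-1) a < F B (-1) 0 := hIic (le_of_lt ha) (Set.self_mem_Iic) ha
          _ < F B (-1) b := hIci (Set.self_mem_Ici) (le_of_lt hb) hb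


set_option maxHeartbeats 1000000

lemma g_formula (γ : ℝ) (hγ : 0 < γ)
    (x h g : ℝ → ℝ → ℝ → ℝ)
    (hx : ∀ B : ℝ, 0 < B → ∀ ε : ℝ, (ε = 1 ∨ ε = -1) → ∀ r : ℝ, r ≠ 0 →
      (2 * Real.sqrt (x B ε r ^ 2 + B ^ 2 / 4) + ε * B) * x B ε r = Real.pi / (γ * r))
    (hh : ∀ B : ℝ, 0 < B → ∀ ε : ℝ, (ε = 1 ∨ ε = -1) → ∀ r : ℝ, r ≠ 0 →
      h B ε r = (1 / (4 * Real.pi)) *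
        (if 0 < r then
          ∫ t in (0 : ℝ)..(x B ε r),
            (1 / 2 + ε * B / (4 * Real.sqrt (t ^ 2 + B ^ 2 / 4))) * t ^ 2
         else
          ∫ t in (x B ε r)..(0 : ℝ),
            (1 / 2 + ε * B / (4 * Real.sqrt (t ^ 2 + B ^ 2 / 4))) * t ^ 2))
    (hg : ∀ B : ℝ, 0 < B → ∀ ε : ℝ, (ε = 1 ∨ ε = -1) → ∀ r : ℝ, r ≠ 0 →
      g B ε r = if 0 < r then -(deriv (h B ε) r) else deriv (h B ε) r)
    {B : ℝ} (hB : 0 < B) {ε : ℝ} (hε : ε = 1 ∨ ε = -1) {r : ℝ} (hr : r ≠ 0) :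
    g B ε r = ((1 / 2 + ε * B / (4 * S B (x B ε r))) * (x B ε r) ^ 2)
      / (4 * γ * r ^ 2 * Fd B ε (x B ε r)) := by
  have hπ : (0:ℝ) < Real.pi := Real.pi_pos
  have hγ' : γ ≠ 0 := ne_of_gt hγ
  have hxeq : ∀ y : ℝ, y ≠ 0 → F B ε (x B ε y) = Real.pi / (γ * y) :=
    fun y hy => hx B hB ε hε y hy
  have hmono := F_strictMono hB hε
  have hsurj : Function.Surjective (F B ε) := by
    intro z
    by_cases hz : z = 0
    · exact ⟨0, by simp [F, hz]⟩
    · refine ⟨x B ε (Real.pi / (γ * z)), ?_⟩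
      have hrz : Real.pi / (γ * z) ≠ 0 :=
        div_ne_zero (ne_of_gt hπ) (mul_ne_zero hγ' hz)
      rw [hxeq _ hrz]
      field_simp
  set e := StrictMono.orderIsoOfSurjective (F B ε) hmono hsurj with he
  have hxe : ∀ y : ℝ, y ≠ 0 → x B ε y = e.symm (Real.pi / (γ * y)) := by
    intro y hy
    have h1 : e.symm (F B ε (x B ε y)) = x B ε y :=
      StrictMono.orderIsoOfSurjective_symm_apply_self _ hmono hsurj _
    rw [← h1, hxeq y hy]
  have hne : ∀ᶠ y in 𝓝 r, y ≠ 0 := by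
    have : {y : ℝ | y ≠ 0} ∈ 𝓝 r := isOpen_compl_singleton.mem_nhds hr
    exact this
  have hcx : ContinuousAt (fun y => x B ε y) r := by
    have hc1 : Continuous fun y : ℝ => e.symm y := e.symm.toHomeomorph.continuous
    have hc2 : ContinuousAt (fun y : ℝ => Real.pi / (γ * y)) r :=
      ContinuousAt.div continuousAt_const ((continuous_const.mul continuous_id).continuousAt)
        (mul_ne_zero hγ' hr)
    have hc3 : ContinuousAt (fun y : ℝ => e.symm (Real.pi / (γ * y))) r :=
      (hc1.continuousAt).comp hc2
    apply hc3.congr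
    exact (hne.mono fun y hy => (hxe y hy).symm)
  set x₀ := x B ε r with hx₀
  have hFx0 : F B ε x₀ = Real.pi / (γ * r) := hxeq r hr
  have hFx0ne : F B ε x₀ ≠ 0 := by
    rw [hFx0]; exact div_ne_zero (ne_of_gt hπ) (mul_ne_zero hγ' hr)
  have hx0ne : x₀ ≠ 0 := by
    intro hc
    apply hFx0ne
    rw [F, hc]; ring
  have hFd := Fd_pos hB hε (Or.inr hx0ne)
  have hFdne : Fd B ε x₀ ≠ 0 := ne_of_gt hFd
  set φ' : ℝ := Real.pi / γ * (-(Fd B ε x₀) / (F B ε x₀) ^ 2) with hφ'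
  have hφd : HasDerivAt (fun u => Real.pi / γ * (F B ε u)⁻¹) φ' x₀ := by
    have h1 := (hasDerivAt_F hB ε x₀).inv hFx0ne
    have h2 := h1.const_mul (Real.pi / γ)
    exact h2
  have hφ'ne : φ' ≠ 0 := by
    rw [hφ']
    have h1 : (0:ℝ) < Real.pi / γ := by positivity
    have h2 : (0:ℝ) < (F B ε x₀) ^ 2 := by positivity
    intro hc
    rw [mul_eq_zero] at hc
    rcases hc with hc | hc
    · exact h1.ne' hc
    · rw [div_eq_zero_iff] at hc
      rcases hc with hc | hc
      · exact hFdne (neg_eq_zero.1 hc)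
      · exact h2.ne' hc
  have hfg : ∀ᶠ y in 𝓝 r, Real.pi / γ * (F B ε (x B ε y))⁻¹ = y := by
    refine hne.mono fun y hy => ?_
    rw [hxeq y hy]
    field_simp
  have hxd : HasDerivAt (fun y => x B ε y) φ'⁻¹ r :=
    HasDerivAt.of_local_left_inverse hcx hφd hφ'ne hfg
  -- FTC part
  set f : ℝ → ℝ := fun t => (1 / 2 + ε * B / (4 * Real.sqrt (t ^ 2 + B ^ 2 / 4))) * t ^ 2 with hf
  have hfc : Continuous f := by
    have hSc : Continuous (S B) := by
      apply Real.continuous_sqrt.comp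
      continuity
    have hden : ∀ t : ℝ, 4 * Real.sqrt (t ^ 2 + B ^ 2 / 4) ≠ 0 := by
      intro t
      have := S_pos hB t
      rw [S] at this
      positivity
    exact (continuous_const.add ((continuous_const.mul continuous_const).div
      (continuous_const.mul (by exact hSc)) hden)).mul (continuous_pow 2)
  set H : ℝ → ℝ := fun u => ∫ t in (0:ℝ)..u, f t with hH
  have hHd : HasDerivAt H (f x₀) x₀ := by
    exact (intervalIntegral.integral_hasStrictDerivAt_right
      (hfc.intervalIntegrable _ _)
      (hfc.stronglyMeasurableAtFilter _ _)
      hfc.continuousAt).hasDerivAt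
  have hcore : HasDerivAt (fun y => H (x B ε y)) (f x₀ * φ'⁻¹) r := hHd.comp r hxd
  have hφ'val : φ' = -(γ * r ^ 2 * Fd B ε x₀) / Real.pi := by
    rw [hφ', hFx0]
    field_simp
  have hval : -(1 / (4 * Real.pi) * (f x₀ * φ'⁻¹))
      = ((1 / 2 + ε * B / (4 * S B x₀)) * x₀ ^ 2) / (4 * γ * r ^ 2 * Fd B ε x₀) := by
    have hfx : f x₀ = (1 / 2 + ε * B / (4 * S B x₀)) * x₀ ^ 2 := rfl
    rw [hfx, hφ'val]
    generalize (1 / 2 + ε * B / (4 * S B x₀)) * x₀ ^ 2 = P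
    rw [inv_div]
    field_simp
  rcases hr.lt_or_gt with hrneg | hrpos
  · have hev : ∀ᶠ y in 𝓝 r, y < 0 := eventually_lt_nhds hrneg
    have hhe : h B ε =ᶠ[𝓝 r] fun y => 1 / (4 * Real.pi) * (-(H (x B ε y))) := by
      filter_upwards [hev] with y hy
      rw [hh B hB ε hε y (ne_of_lt hy), if_neg (not_lt.2 (le_of_lt hy))]
      congr 1
      rw [hH]
      exact intervalIntegral.integral_symm _ _
    have hder : HasDerivAt (h B ε) (1 / (4 * Real.pi) * (-(f x₀ * φ'⁻¹))) r :=
      ((hcore.neg).const_mul (1 / (4 * Real.pi))).congr_of_eventuallyEq hhe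
    rw [hg B hB ε hε r hr, if_neg (not_lt.2 (le_of_lt hrneg)), hder.deriv, ← hval]
    ring
  · have hev : ∀ᶠ y in 𝓝 r, 0 < y := eventually_gt_nhds hrpos
    have hhe : h B ε =ᶠ[𝓝 r] fun y => 1 / (4 * Real.pi) * H (x B ε y) := by
      filter_upwards [hev] with y hy
      rw [hh B hB ε hε y (ne_of_gt hy), if_pos hy]
    have hder : HasDerivAt (h B ε) (1 / (4 * Real.pi) * (f x₀ * φ'⁻¹)) r :=
      (hcore.const_mul (1 / (4 * Real.pi))).congr_of_eventuallyEq hhe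
    rw [hg B hB ε hε r hr, if_pos hrpos, hder.deriv, ← hval]

-- cube root helper
lemma cube_rpow {y : ℝ} (hy : 0 ≤ y) : (y ^ 3) ^ ((1:ℝ)/3) = y := by
  rw [← Real.rpow_natCast y 3, ← Real.rpow_mul hy]
  norm_num

lemma rpow_third_mul {B : ℝ} (hB : 0 < B) :
    B ^ ((1:ℝ)/3) * B ^ ((2:ℝ)/3) = B := by
  rw [← Real.rpow_add hB]
  norm_num

-- sign and growth facts for epsilon = -1
lemma neg_case_facts {B a X : ℝ} (hB : 0 < B) (ha : a ≠ 0)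
    (heq : (2 * S B X + -1 * B) * X = a) :
    X ≠ 0 ∧ 4 * X ^ 4 = a ^ 2 + 2 * a * B * X ∧ 0 < a * X := by
  set s := S B X with hs
  have hs2 : s ^ 2 = X ^ 2 + B ^ 2 / 4 := S_sq X
  have hs0 : 0 < s := S_pos hB X
  have hsB : B / 2 ≤ s := half_le_S hB X
  have hX0 : X ≠ 0 := by
    intro hc
    apply ha
    rw [← heq, hc]; ring
  have h2 : 2 * s * X = a + B * X := by linear_combination heq
  have hq : 4 * X ^ 4 = a ^ 2 + 2 * a * B * X := by
    linear_combination (2 * s * X + a + B * X) * h2 - 4 * X ^ 2 * hs2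
  have hsBgt : 0 < 2 * s - B := by
    rcases lt_or_eq_of_le (by linarith : B ≤ 2 * s) with h | h
    · linarith
    · exfalso; apply ha; rw [← heq, ← h]; ring
  have haX : 0 < a * X := by
    have : a * X = (2 * s - B) * X ^ 2 := by rw [← heq]; ring
    rw [this]
    have : 0 < X ^ 2 := by positivity
    positivity
  exact ⟨hX0, hq, haX⟩


lemma tendsto_pos_case (γ r a : ℝ) (hγ : 0 < γ) (hr : r ≠ 0) (X G : ℝ → ℝ)
    (ha : a = Real.pi / (γ * r))
    (heq : ∀ B, 0 < B → (2 * S B (X B) + 1 * B) * X B = a)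
    (hG : ∀ B, 0 < B → G B = ((1 / 2 + 1 * B / (4 * S B (X B))) * (X B) ^ 2)
      / (4 * γ * r ^ 2 * Fd B 1 (X B))) :
    Tendsto (fun B => B ^ ((1:ℝ)/3) * G B) atTop (𝓝 0) := by
  have hπ : (0:ℝ) < Real.pi := Real.pi_pos
  have ha0 : a ≠ 0 := by
    rw [ha]; exact div_ne_zero (ne_of_gt hπ) (mul_ne_zero (ne_of_gt hγ) hr)
  set K : ℝ := a ^ 2 / (32 * γ * r ^ 2) with hK
  have hbound : ∀ᶠ B in atTop, B ^ ((1:ℝ)/3) * G B ≤ K / B ^ 2 := by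
    filter_upwards [eventually_ge_atTop (1:ℝ)] with B hB1
    have hB : (0:ℝ) < B := lt_of_lt_of_le one_pos hB1
    set s := S B (X B) with hsdef
    have hs0 : 0 < s := S_pos hB (X B)
    have hsB : B / 2 ≤ s := half_le_S hB (X B)
    have hFd0 : (0:ℝ) < 2 * s + 1 * B + 2 * (X B) ^ 2 / s := by positivity
    have habs : (2 * s + B) * |X B| = |a| := by
      rw [← heq B hB, abs_mul, abs_of_pos (by linarith : (0:ℝ) < 2 * s + 1 * B)]
      ring_nf
    have hXle : |X B| ≤ |a| / (2 * B) := by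
      rw [le_div_iff₀ (by linarith : (0:ℝ) < 2 * B)]
      calc |X B| * (2 * B) ≤ |X B| * (2 * s + B) := by
            have := abs_nonneg (X B); nlinarith
        _ = |a| := by rw [← habs]; ring
    -- numerator bound
    have hnum : (1 / 2 + 1 * B / (4 * s)) * (X B) ^ 2 ≤ a ^ 2 / (4 * B ^ 2) := by
      have h1 : (1 / 2 + 1 * B / (4 * s)) * (X B) ^ 2 = (2 * s + B) * (X B) ^ 2 / (4 * s) := by
        field_simp; ring
      rw [h1]
      have hX2 : (X B) ^ 2 = |X B| ^ 2 := (sq_abs _).symm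
      have h2 : (2 * s + B) * (X B) ^ 2 = |a| * |X B| := by
        rw [hX2, pow_two, ← mul_assoc, habs]
      rw [h2]
      have h3 : |a| * |X B| ≤ |a| * (|a| / (2 * B)) :=
        mul_le_mul_of_nonneg_left hXle (abs_nonneg a)
      calc |a| * |X B| / (4 * s) ≤ |a| * (|a| / (2 * B)) / (4 * (B / 2)) := by
            apply div_le_div₀ (by positivity) h3 (by linarith) (by linarith)
        _ = a ^ 2 / (4 * B ^ 2) := by
            rw [show |a| * (|a| / (2 * B)) = |a| ^ 2 / (2 * B) by ring, sq_abs]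
            field_simp
    have hG' := hG B hB
    have hFdge : 2 * B ≤ Fd B 1 (X B) := by
      rw [Fd]
      have : 0 ≤ 2 * (X B) ^ 2 / s := by positivity
      nlinarith
    have hgle : G B ≤ a ^ 2 / (4 * B ^ 2) / (4 * γ * r ^ 2 * (2 * B)) := by
      rw [hG']
      apply div_le_div₀ (by positivity) hnum (by positivity)
      have : (0:ℝ) < 4 * γ * r ^ 2 := by positivity
      nlinarith
    have hGnn : 0 ≤ G B := by
      rw [hG']
      have hFd' : 0 < Fd B 1 (X B) := by linarith
      positivity
    have hb1 : B ^ ((1:ℝ)/3) ≤ B := by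
      calc B ^ ((1:ℝ)/3) ≤ B ^ (1:ℝ) :=
            Real.rpow_le_rpow_of_exponent_le hB1 (by norm_num)
        _ = B := Real.rpow_one B
    calc B ^ ((1:ℝ)/3) * G B ≤ B * G B := mul_le_mul_of_nonneg_right hb1 hGnn
      _ ≤ B * (a ^ 2 / (4 * B ^ 2) / (4 * γ * r ^ 2 * (2 * B))) :=
          mul_le_mul_of_nonneg_left hgle (le_of_lt hB)
      _ = K / B ^ 2 := by rw [hK]; field_simp; ring
  have hnn : ∀ᶠ B in atTop, 0 ≤ B ^ ((1:ℝ)/3) * G B := by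
    filter_upwards [eventually_gt_atTop (0:ℝ)] with B hB
    have hs0 : 0 < S B (X B) := S_pos hB (X B)
    have hFd' : 0 < Fd B 1 (X B) := by
      rw [Fd]; positivity
    rw [hG B hB]
    positivity
  have hlim : Tendsto (fun B : ℝ => K / B ^ 2) atTop (𝓝 0) :=
    tendsto_const_nhds.div_atTop (tendsto_pow_atTop (by norm_num) |>.comp tendsto_id)
  exact squeeze_zero' hnn hbound hlim


lemma tendsto_neg_case (γ r a : ℝ) (hγ : 0 < γ) (hr : r ≠ 0) (X G : ℝ → ℝ)
    (ha : a = Real.pi / (γ * r))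
    (heq : ∀ B, 0 < B → (2 * S B (X B) + -1 * B) * X B = a)
    (hG : ∀ B, 0 < B → G B = ((1 / 2 + -1 * B / (4 * S B (X B))) * (X B) ^ 2)
      / (4 * γ * r ^ 2 * Fd B (-1) (X B))) :
    Tendsto (fun B => B ^ ((1:ℝ)/3) * G B) atTop
      (𝓝 ((Real.pi ^ 2 / (2 ^ 11 * 27 * γ ^ 5)) ^ ((1:ℝ)/3) * |r| ^ (-(8/3 : ℝ)))) := by
  have hπ : (0:ℝ) < Real.pi := Real.pi_pos
  have ha0 : a ≠ 0 := by
    rw [ha]; exact div_ne_zero (ne_of_gt hπ) (mul_ne_zero (ne_of_gt hγ) hr)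
  have habs0 : 0 < |a| := abs_pos.2 ha0
  set w : ℝ → ℝ := fun B => (X B) ^ 3 / B with hwdef
  -- step 1 : w → a / 2
  have hw : Tendsto w atTop (𝓝 (a / 2)) := by
    have hkey : ∀ᶠ B in atTop, |w B - a / 2| ≤ a ^ 2 / 4 / B := by
      filter_upwards [eventually_ge_atTop (1:ℝ), eventually_ge_atTop (2 / |a|)]
        with B hB1 hB2
      have hB : (0:ℝ) < B := lt_of_lt_of_le one_pos hB1
      obtain ⟨hX0, hq, haX⟩ := neg_case_facts hB ha0 (heq B hB)
      have habsX : 0 < |X B| := abs_pos.2 hX0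
      have hX4 : (X B) ^ 4 = |X B| ^ 4 := by
        rw [← abs_pow]; exact (abs_of_nonneg (by positivity)).symm
      have haXabs : a * (X B) = |a| * |X B| := by
        rw [← abs_mul]; exact (abs_of_pos haX).symm
      have hq' : 4 * |X B| ^ 4 = a ^ 2 + 2 * B * (|a| * |X B|) := by
        rw [← hX4, ← haXabs]; linarith [hq]
      have hX3 : |a| * B / 2 ≤ |X B| ^ 3 := by
        nlinarith [sq_nonneg a, mul_pos habs0 habsX, habsX]
      have haB2 : (2:ℝ) ≤ |a| * B := by
        rw [div_le_iff₀ habs0] at hB2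
        nlinarith
      have hX1 : 1 ≤ |X B| := by
        nlinarith [habsX, sq_nonneg (|X B| - 1), sq_nonneg (|X B| + 1)]
      have hid : w B - a / 2 = a ^ 2 / (4 * B * X B) := by
        rw [hwdef]
        field_simp
        linear_combination 2 * hq
      rw [hid, abs_div, abs_of_nonneg (by positivity : (0:ℝ) ≤ a ^ 2)]
      have habs4 : |4 * B * X B| = 4 * B * |X B| := by
        rw [abs_mul, abs_of_pos (by linarith : (0:ℝ) < 4 * B)]
      rw [habs4]
      rw [div_le_div_iff₀ (by positivity) (by positivity)]
      nlinarith [mul_nonneg (mul_nonneg (sq_nonneg a) hB.le) (by linarith : (0:ℝ) ≤ |X B| - 1)]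
    have h0 : Tendsto (fun B => w B - a / 2) atTop (𝓝 0) := by
      have hg0 : Tendsto (fun B : ℝ => a ^ 2 / 4 / B) atTop (𝓝 0) :=
        tendsto_const_nhds.div_atTop tendsto_id
      refine squeeze_zero_norm' ?_ hg0
      filter_upwards [hkey] with B hB
      simpa [Real.norm_eq_abs] using hB
    have := h0.add_const (a / 2)
    simpa using this
  -- step 2 : vv → ((a/2)^2)^(1/3)
  set vv : ℝ → ℝ := fun B => (X B) ^ 2 / B ^ ((2:ℝ)/3) with hvvdef
  set L2 : ℝ := ((a / 2) ^ 2) ^ ((1:ℝ)/3) with hL2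
  have hvv : Tendsto vv atTop (𝓝 L2) := by
    have hψ : ContinuousAt (fun y : ℝ => (y ^ 2) ^ ((1:ℝ)/3)) (a / 2) := by
      exact (Real.continuousAt_rpow_const _ _ (Or.inr (by norm_num))).comp
        ((continuous_pow 2).continuousAt)
    have hcomp : Tendsto (fun B => ((w B) ^ 2) ^ ((1:ℝ)/3)) atTop (𝓝 L2) :=
      hψ.tendsto.comp hw
    apply hcomp.congr'
    filter_upwards [eventually_gt_atTop (0:ℝ)] with B hB
    have hb23 : (B ^ ((2:ℝ)/3)) ^ (3:ℕ) = B ^ 2 := by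
      rw [← Real.rpow_natCast (B ^ ((2:ℝ)/3)) 3, ← Real.rpow_mul hB.le]
      norm_num
    have h1 : (w B) ^ 2 = (vv B) ^ 3 := by
      rw [hwdef, hvvdef]
      simp only []
      rw [div_pow, div_pow, hb23]
      ring_nf
    rw [h1, cube_rpow (by positivity : (0:ℝ) ≤ vv B)]
  -- step 3 : X^2/B^2 → 0
  have hX2B2 : Tendsto (fun B => (X B) ^ 2 / B ^ 2) atTop (𝓝 0) := by
    have h1 : Tendsto (fun B : ℝ => vv B * B ^ (-((4:ℝ)/3))) atTop (𝓝 (L2 * 0)) :=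
      hvv.mul (tendsto_rpow_neg_atTop (by norm_num : (0:ℝ) < 4/3))
    rw [mul_zero] at h1
    apply h1.congr'
    filter_upwards [eventually_gt_atTop (0:ℝ)] with B hB
    have hmul : B ^ ((2:ℝ)/3) * B ^ ((4:ℝ)/3) = B ^ 2 := by
      rw [← Real.rpow_add hB]
      rw [show ((2:ℝ)/3 + 4/3) = 2 by norm_num, Real.rpow_two]
    rw [hvvdef]
    simp only []
    rw [Real.rpow_neg hB.le, ← div_eq_mul_inv, div_div, hmul]
  -- step 4 : s / B → 1/2
  have hsdivB : Tendsto (fun B => S B (X B) / B) atTop (𝓝 (1/2)) := by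
    have h1 : Tendsto (fun B => Real.sqrt ((X B) ^ 2 / B ^ 2 + 1/4)) atTop
        (𝓝 (Real.sqrt (0 + 1/4))) :=
      (Real.continuous_sqrt.continuousAt).tendsto.comp (hX2B2.add_const (1/4))
    have h2 : Real.sqrt (0 + 1/4) = 1/2 := by
      rw [zero_add, show (1:ℝ)/4 = (1/2)^2 by norm_num, Real.sqrt_sq (by norm_num : (0:ℝ) ≤ 1/2)]
    rw [h2] at h1
    apply h1.congr'
    filter_upwards [eventually_gt_atTop (0:ℝ)] with B hB
    have hs0 : 0 < S B (X B) := S_pos hB (X B)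
    have hsq : (X B) ^ 2 / B ^ 2 + 1/4 = (S B (X B) / B) ^ 2 := by
      rw [div_pow, S_sq]
      rw [div_add_div _ _ (by positivity) (by norm_num : (4:ℝ) ≠ 0),
        div_eq_div_iff (by positivity) (by positivity)]
      ring
    rw [hsq, Real.sqrt_sq (by positivity : (0:ℝ) ≤ S B (X B) / B)]
  -- step 5 : identity for B^{1/3} * G B
  have hGid : ∀ᶠ B in atTop, B ^ ((1:ℝ)/3) * G B
      = vv B / (8 * γ * r ^ 2 * (4 * (S B (X B) / B) + 1)) := by
    filter_upwards [eventually_gt_atTop (0:ℝ)] with B hB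
    obtain ⟨hX0, hq, haX⟩ := neg_case_facts hB ha0 (heq B hB)
    have hs0 : 0 < S B (X B) := S_pos hB (X B)
    have hsB : B / 2 ≤ S B (X B) := half_le_S hB (X B)
    have hs2 : (S B (X B)) ^ 2 = (X B) ^ 2 + B ^ 2 / 4 := S_sq (X B)
    set s := S B (X B) with hsdef
    have hG' := hG B hB
    have h4sB : (0:ℝ) < 4 * s + B := by linarith
    have hFdpos : 0 < 2 * s + -1 * B + 2 * (X B) ^ 2 / s := by
      have h := Fd_pos (ε := -1) hB (Or.inr rfl) (Or.inr hX0)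
      rw [Fd, ← hsdef] at h
      exact h
    have hstep1 : G B = (X B) ^ 2 / (8 * γ * r ^ 2 * (4 * s + B)) := by
      rw [hG', Fd, ← hsdef]
      rw [div_eq_div_iff
        (mul_pos (by positivity : (0:ℝ) < 4 * γ * r ^ 2) hFdpos).ne' (by positivity)]
      field_simp
      linear_combination 64 * hs2
    rw [hstep1]
    have hb1 : (0:ℝ) < B ^ ((1:ℝ)/3) := Real.rpow_pos_of_pos hB _
    have hb2 : (0:ℝ) < B ^ ((2:ℝ)/3) := Real.rpow_pos_of_pos hB _
    have hb12 : B ^ ((1:ℝ)/3) * B ^ ((2:ℝ)/3) = B := rpow_third_mul hB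
    rw [hvvdef]
    simp only []
    rw [div_div, mul_div_assoc', div_eq_div_iff (by positivity) (by positivity)]
    field_simp
    linear_combination hb12
  -- step 6 : assemble
  have hden : Tendsto (fun B => 8 * γ * r ^ 2 * (4 * (S B (X B) / B) + 1)) atTop
      (𝓝 (24 * γ * r ^ 2)) := by
    have h1 := ((hsdivB.const_mul (4:ℝ)).add_const (1:ℝ)).const_mul (8 * γ * r ^ 2)
    have : 8 * γ * r ^ 2 * (4 * (1/2 : ℝ) + 1) = 24 * γ * r ^ 2 := by ring
    rw [this] at h1
    exact h1
  have hfinal : Tendsto (fun B => B ^ ((1:ℝ)/3) * G B) atTop (𝓝 (L2 / (24 * γ * r ^ 2))) := by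
    have h1 := hvv.div hden (by positivity : (0:ℝ) < 24 * γ * r ^ 2).ne'
    exact Tendsto.congr' (hGid.mono fun B hB => hB.symm) h1
  have hL : L2 / (24 * γ * r ^ 2)
      = (Real.pi ^ 2 / (2 ^ 11 * 27 * γ ^ 5)) ^ ((1:ℝ)/3) * |r| ^ (-(8/3 : ℝ)) := by
    have hC : (0:ℝ) ≤ Real.pi ^ 2 / (2 ^ 11 * 27 * γ ^ 5) := by positivity
    have hr8 : (0:ℝ) < r ^ 8 := by positivity
    have e1 : L2 / (24 * γ * r ^ 2)
        = ((a / 2) ^ 2 * (1 / (24 * γ * r ^ 2)) ^ 3) ^ ((1:ℝ)/3) := by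
      rw [Real.mul_rpow (by positivity) (by positivity),
        cube_rpow (by positivity : (0:ℝ) ≤ 1 / (24 * γ * r ^ 2)), hL2]
      rw [div_eq_mul_inv, one_div]
      norm_num
    have e2 : (a / 2) ^ 2 * (1 / (24 * γ * r ^ 2)) ^ 3
        = Real.pi ^ 2 / (2 ^ 11 * 27 * γ ^ 5) / r ^ 8 := by
      rw [ha]
      field_simp
      ring
    have h8 : |r| ^ (-(8/3 : ℝ)) = ((r ^ 8) ^ ((1:ℝ)/3))⁻¹ := by
      rw [show (-(8/3:ℝ)) = ((8:ℕ):ℝ) * (-((1:ℝ)/3)) by norm_num]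
      rw [Real.rpow_mul (abs_nonneg r), Real.rpow_natCast]
      rw [pow_abs, abs_of_nonneg (le_of_lt hr8)]
      rw [Real.rpow_neg (le_of_lt hr8)]
    rw [e1, e2, h8, Real.div_rpow hC (le_of_lt hr8), div_eq_mul_inv]
  rw [← hL]
  exact hfinal


lemma levy (γ : ℝ) (hγ : 0 < γ) :
    ∫⁻ r in ({0}ᶜ : Set ℝ),
      ENNReal.ofReal (min 1 (r ^ 2) *
        ((Real.pi ^ 2 / (2 ^ 11 * 27 * γ ^ 5)) ^ ((1 : ℝ) / 3) * |r| ^ (-(8 / 3 : ℝ)))) < ⊤ := by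
  set C : ℝ := (Real.pi ^ 2 / (2 ^ 11 * 27 * γ ^ 5)) ^ ((1 : ℝ) / 3) with hCdef
  have hC : 0 ≤ C := Real.rpow_nonneg (by positivity) _
  set φ : ℝ → ℝ := fun r => min 1 (r ^ 2) * (C * |r| ^ (-(8 / 3 : ℝ))) with hφdef
  have hφmeas : Measurable φ := by
    apply Measurable.mul
    · exact measurable_const.min (measurable_id.pow_const 2)
    · exact (measurable_id.abs.pow_const _).const_mul C
  have hφnn : ∀ r : ℝ, 0 ≤ φ r := by
    intro r
    apply mul_nonneg
    · exact le_min (by norm_num) (sq_nonneg r)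
    · exact mul_nonneg hC (Real.rpow_nonneg (abs_nonneg r) _)
  -- integrability on (0,1]
  have h01 : IntegrableOn φ (Ioc (0:ℝ) 1) := by
    have hg : IntegrableOn (fun x : ℝ => C * x ^ (-(2/3) : ℝ)) (Ioc (0:ℝ) 1) := by
      have := intervalIntegral.intervalIntegrable_rpow' (a := 0) (b := 1)
        (r := -(2/3)) (by norm_num)
      rw [intervalIntegrable_iff, uIoc_of_le (by norm_num : (0:ℝ) ≤ 1)] at this
      exact this.const_mul C
    apply Integrable.mono' hg hφmeas.aestronglyMeasurable
    filter_upwards [ae_restrict_mem measurableSet_Ioc] with x hx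
    rw [Real.norm_eq_abs, abs_of_nonneg (hφnn x)]
    have hx0 : 0 < x := hx.1
    have habs : |x| = x := abs_of_pos hx0
    have hrw : x ^ (2:ℕ) * (x ^ (-(8/3) : ℝ)) = x ^ (-(2/3) : ℝ) := by
      rw [← Real.rpow_natCast x 2, ← Real.rpow_add hx0]
      norm_num
    calc φ x ≤ x ^ 2 * (C * |x| ^ (-(8 / 3 : ℝ))) :=
          mul_le_mul_of_nonneg_right (min_le_right _ _)
            (mul_nonneg hC (Real.rpow_nonneg (abs_nonneg x) _))
      _ = C * x ^ (-(2/3) : ℝ) := by rw [habs, ← hrw]; ring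
  -- integrability on (1,∞)
  have h1top : IntegrableOn φ (Ioi (1:ℝ)) := by
    have hg : IntegrableOn (fun x : ℝ => C * x ^ (-(8/3) : ℝ)) (Ioi (1:ℝ)) :=
      (integrableOn_Ioi_rpow_of_lt (by norm_num) one_pos).const_mul C
    apply Integrable.mono' hg hφmeas.aestronglyMeasurable
    filter_upwards [ae_restrict_mem measurableSet_Ioi] with x hx
    rw [Real.norm_eq_abs, abs_of_nonneg (hφnn x)]
    have hx0 : (0:ℝ) < x := lt_trans one_pos hx
    have habs : |x| = x := abs_of_pos hx0
    calc φ x ≤ 1 * (C * |x| ^ (-(8 / 3 : ℝ))) :=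
          mul_le_mul_of_nonneg_right (min_le_left _ _)
            (mul_nonneg hC (Real.rpow_nonneg (abs_nonneg x) _))
      _ = C * x ^ (-(8/3) : ℝ) := by rw [habs]; ring
  have hpos : IntegrableOn φ (Ioi (0:ℝ)) := by
    rw [← Ioc_union_Ioi_eq_Ioi (by norm_num : (0:ℝ) ≤ 1)]
    exact h01.union h1top
  have hneg : IntegrableOn φ (Iio (0:ℝ)) := by
    rw [← (Measure.measurePreserving_neg (volume : Measure ℝ)).integrableOn_comp_preimage
        (Homeomorph.neg ℝ).measurableEmbedding]
    simp only [Function.comp_def, neg_sq, neg_preimage, neg_Iio, neg_zero, abs_neg]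
    have heven : (fun x : ℝ => φ (-x)) = φ := by
      funext y
      rw [hφdef]
      simp only [neg_sq, abs_neg]
    rw [show (fun x : ℝ => φ (-x)) = φ from heven] at *
    exact hpos
  have hcompl : IntegrableOn φ ({0}ᶜ : Set ℝ) := by
    have : ({0}ᶜ : Set ℝ) = Iio 0 ∪ Ioi 0 := by
      ext y
      simp only [mem_compl_iff, mem_singleton_iff, mem_union, mem_Iio, mem_Ioi]
      exact ⟨fun hy => lt_or_gt_of_ne hy, fun hy => hy.elim ne_of_lt ne_of_gt⟩
    rw [this]
    exact hneg.union hpos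
  exact hcompl.lintegral_lt_top

end Stmt8Aux

set_option maxHeartbeats 1000000 in
/-- Fix `γ > 0` and define `g_∞(r) = (π²/(2¹¹·27·γ⁵))^(1/3)·|r|^(-8/3)` for
`r ≠ 0`.  Then for every `r ≠ 0`, `B^(1/3)·g_{B,+}(r) → 0` and `B^(1/3)·g_{B,-}(r) → g_∞(r)`
as `B → +∞`, and `g_∞` is the density of a Lévy measure on `ℝ \ {0}`. -/
theorem stmt_8 (γ : ℝ) (hγ : 0 < γ)
    (x h g : ℝ → ℝ → ℝ → ℝ)
    (hx : ∀ B : ℝ, 0 < B → ∀ ε : ℝ, (ε = 1 ∨ ε = -1) → ∀ r : ℝ, r ≠ 0 →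
      (2 * Real.sqrt (x B ε r ^ 2 + B ^ 2 / 4) + ε * B) * x B ε r = Real.pi / (γ * r))
    (hh : ∀ B : ℝ, 0 < B → ∀ ε : ℝ, (ε = 1 ∨ ε = -1) → ∀ r : ℝ, r ≠ 0 →
      h B ε r = (1 / (4 * Real.pi)) *
        (if 0 < r then
          ∫ t in (0 : ℝ)..(x B ε r),
            (1 / 2 + ε * B / (4 * Real.sqrt (t ^ 2 + B ^ 2 / 4))) * t ^ 2
         else
          ∫ t in (x B ε r)..(0 : ℝ),
            (1 / 2 + ε * B / (4 * Real.sqrt (t ^ 2 + B ^ 2 / 4))) * t ^ 2))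
    (hg : ∀ B : ℝ, 0 < B → ∀ ε : ℝ, (ε = 1 ∨ ε = -1) → ∀ r : ℝ, r ≠ 0 →
      g B ε r = if 0 < r then -(deriv (h B ε) r) else deriv (h B ε) r) :
    (∀ r : ℝ, r ≠ 0 →
      Tendsto (fun B => B ^ ((1 : ℝ) / 3) * g B 1 r) atTop (𝓝 0)) ∧
    (∀ r : ℝ, r ≠ 0 →
      Tendsto (fun B => B ^ ((1 : ℝ) / 3) * g B (-1) r) atTop
        (𝓝 ((Real.pi ^ 2 / (2 ^ 11 * 27 * γ ^ 5)) ^ ((1 : ℝ) / 3) * |r| ^ (-(8 / 3 : ℝ))))) ∧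
    ∫⁻ r in ({0}ᶜ : Set ℝ),
      ENNReal.ofReal (min 1 (r ^ 2) *
        ((Real.pi ^ 2 / (2 ^ 11 * 27 * γ ^ 5)) ^ ((1 : ℝ) / 3) * |r| ^ (-(8 / 3 : ℝ)))) < ⊤ := by
  refine ⟨?_, ?_, Stmt8Aux.levy γ hγ⟩
  · intro r hr
    exact Stmt8Aux.tendsto_pos_case γ r (Real.pi / (γ * r)) hγ hr
      (fun B => x B 1 r) (fun B => g B 1 r) rfl
      (fun B hB => hx B hB 1 (Or.inl rfl) r hr)
      (fun B hB => Stmt8Aux.g_formula γ hγ x h g hx hh hg hB (Or.inl rfl) hr)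
  · intro r hr
    exact Stmt8Aux.tendsto_neg_case γ r (Real.pi / (γ * r)) hγ hr
      (fun B => x B (-1) r) (fun B => g B (-1) r) rfl
      (fun B hB => hx B hB (-1) (Or.inr rfl) r hr)
      (fun B hB => Stmt8Aux.g_formula γ hγ x h g hx hh hg hB (Or.inr rfl) hr)
end
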